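/- arXiv:1005.0488 — 7 statements merged into one kernel-verified Lean document; each statement's English description precedes it below -/
import Mathlib

section
/- Let n ≥ 1 and m ≥ n be integers, let U = {u_1,…,u_n}, V = {v_1,…,v_n}, W = {w_1,…,w_n} be three pairwise disjoint sets, and let T = {T_1,…,T_m} be a collection of m triples in U × V × W. Let G' be the graph with vertex set {û, v̂, ŵ, t̂} ∪ {u_i : 1 ≤ i ≤ n} ∪ {v_i : 1 ≤ i ≤ n} ∪ {w_i : 1 ≤ i ≤ n} ∪ {t_i : 1 ≤ i ≤ m} ∪ {a_j : 1 ≤ j ≤ m−n}, and edge set consisting of: û u_i, v̂ v_i, ŵ w_i for 1 ≤ i ≤ n; t̂ t_i for 1 ≤ i ≤ m; û a_j, v̂ a_j, ŵ a_j for 1 ≤ j ≤ m−n; t_i a_j for all 1 ≤ i ≤ m, 1 ≤ j ≤ m−n; and t_i u_j, t_i v_j, t_i w_j whenever u_j ∈ T_i, v_j ∈ T_i, w_j ∈ T_i respectively. Let S = {û, v̂, ŵ, t̂}. Then κ_{G'}(S) ≥ m if and only if there is a subset M of T with |M| = n such that whenever (u,v,w) and (u',v',w') are distinct triples in M, u ≠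 u', v ≠ v' and w ≠ w' (i.e., M is a perfect 3-dimensional matching). -/
open SimpleGraph


namespace SimpleGraph.Walk

variable {V : Type*} {G : SimpleGraph V}

lemma exists_dart_snd_eq {u v : V} (p : G.Walk u v) (hp : ¬ p.Nil) :
    ∃ d ∈ p.darts, d.toProd.2 = v := by
  induction p with
  | nil => simp at hp
  | cons h q ih =>
    cases q with
    | nil => exact ⟨⟨(_, _), h⟩, by simp, rfl⟩
    | cons h' r =>
      obtain ⟨d, hd, hd2⟩ := ih (by simp)
      exact ⟨d, by rw [darts_cons]; exact List.mem_cons_of_mem _ hd, hd2⟩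

lemma mem_support_of_rotate [DecidableEq V] {u x z : V} {c : G.Walk u u}
    (hx : x ∈ c.support) (hz : z ∈ (c.rotate _ hx).support) : z ∈ c.support := by
  rw [(c.rotate _ hx).support_eq_cons] at hz
  rcases List.mem_cons.mp hz with h | h
  · exact h ▸ hx
  · have := (support_rotate c _ hx).mem_iff.mp h
    exact List.mem_of_mem_tail this

/-- Every vertex on a cycle has two distinct neighbours on the cycle. -/
lemma IsCycle.two_neighbors {u v : V} {c : G.Walk u u} (hc : c.IsCycle)
    (hv : v ∈ c.support) :
    ∃ x y, x ≠ y ∧ G.Adj v x ∧ G.Adj v y ∧ x ∈ c.support ∧ y ∈ c.support := by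
  classical
  have hc' : (c.rotate _ hv).IsCycle := hc.rotate hv
  set c' := c.rotate _ hv with hc'def
  cases hcc : c' with
  | nil => exact absurd (hcc ▸ hc') (IsCycle.not_of_nil)
  | cons h p =>
    rename_i b
    -- first dart : v → b
    have hb : b ∈ c'.support := by rw [hcc]; simp [support_cons]
    -- last dart : y → v
    obtain ⟨d, hd, hd2⟩ := exists_dart_snd_eq c' (by rw [hcc]; simp)
    have hy : d.toProd.1 ∈ c'.support := dart_fst_mem_support_of_mem_darts _ hd
    have hadjy : G.Adj v d.toProd.1 := by
      have := d.adj
      rw [hd2] at this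
      exact this.symm
    refine ⟨b, d.toProd.1, ?_, h, hadjy, mem_support_of_rotate hv hb,
      mem_support_of_rotate hv hy⟩
    -- distinctness via nodup edges
    intro hbd
    have hnodup : (c'.darts.map Dart.edge).Nodup := hc'.isTrail.edges_nodup
    have hinj := List.inj_on_of_nodup_map (hnodup)
    have hdfirst : (⟨(v, b), h⟩ : G.Dart) ∈ c'.darts := by
      rw [hcc, darts_cons]; exact List.mem_cons_self
    have heq : (⟨(v, b), h⟩ : G.Dart).edge = d.edge := by
      have : d.toProd = (b, v) := by
        ext
        · exact hbd.symm
        · exact hd2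
      simp [Dart.edge, this, Sym2.eq_swap]
    have := hinj hdfirst hd heq
    have hvb : v = b := by
      have h2 := congrArg (fun d => d.toProd.1) this
      exact h2.trans hbd.symm
    exact G.irrefl (hvb ▸ h)

end SimpleGraph.Walk

open SimpleGraph


/-- `F` is an internally disjoint family of trees connecting `S` in `G`:
each member is a subgraph of `G` that is a tree containing all of `S`, the members are
pairwise edge-disjoint, and any two distinct members intersect exactly in `S`. -/
def IsIDTrees {V : Type*} (G : SimpleGraph V) (S : Set V) {ι : Type*} (F : ι → G.Subgraph) : Prop :=
  (∀ i, S ⊆ (F i).verts ∧ ((F i).coe).IsTree) ∧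
    ∀ i j, i ≠ j → (F i).verts ∩ (F j).verts = S ∧ Disjoint (F i).edgeSet (F j).edgeSet

/-- Vertices of the graph `G'` built from a 3-dimensional-matching instance with
`|U| = |V| = |W| = n` and `m` triples. -/
inductive DMVert (n m : ℕ) where
  | uhat | vhat | what | that
  | u (i : Fin n) | v (i : Fin n) | w (i : Fin n)
  | t (i : Fin m) | a (j : Fin (m - n))

/-- The base (asymmetric) adjacency relation of `G'`; a triple `T i` is recorded by the indices
of its three coordinates in `U`, `V` and `W`. -/
def dmRel {n m : ℕ} (T : Fin m → Fin n × Fin n × Fin n) :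
    DMVert n m → DMVert n m → Prop
  | .uhat, .u _ => True
  | .vhat, .v _ => True
  | .what, .w _ => True
  | .that, .t _ => True
  | .uhat, .a _ => True
  | .vhat, .a _ => True
  | .what, .a _ => True
  | .t _, .a _ => True
  | .t i, .u j => (T i).1 = j
  | .t i, .v j => (T i).2.1 = j
  | .t i, .w j => (T i).2.2 = j
  | _, _ => False

/-- The graph `G'` of the 3-DM reduction. -/
def dmGraph {n m : ℕ} (T : Fin m → Fin n × Fin n × Fin n) : SimpleGraph (DMVert n m) :=
  SimpleGraph.fromRel (dmRel T)

/-- The set `S = {û, v̂, ŵ, t̂}`. -/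
def dmS (n m : ℕ) : Set (DMVert n m) :=
  {DMVert.uhat, DMVert.vhat, DMVert.what, DMVert.that}


section DM

variable {n m : ℕ} (T : Fin m → Fin n × Fin n × Fin n)

lemma dmGraph_adj {x y : DMVert n m} :
    (dmGraph T).Adj x y ↔ x ≠ y ∧ (dmRel T x y ∨ dmRel T y x) :=
  SimpleGraph.fromRel_adj _ _ _

lemma adj_that {x : DMVert n m} (h : (dmGraph T).Adj .that x) : ∃ i, x = .t i := by
  rw [dmGraph_adj] at h
  obtain ⟨-, h | h⟩ := h <;> cases x <;> simp [dmRel] at h ⊢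

lemma adj_uhat {x : DMVert n m} (h : (dmGraph T).Adj .uhat x) :
    (∃ i, x = .u i) ∨ (∃ j, x = .a j) := by
  rw [dmGraph_adj] at h
  obtain ⟨-, h | h⟩ := h <;> cases x <;> simp [dmRel] at h ⊢

lemma adj_u {j : Fin n} {x : DMVert n m} (h : (dmGraph T).Adj (.u j) x) :
    x = .uhat ∨ ∃ l, x = .t l ∧ (T l).1 = j := by
  rw [dmGraph_adj] at h
  obtain ⟨-, h | h⟩ := h <;> cases x <;> simp [dmRel] at h ⊢ <;> tauto

lemma adj_v {j : Fin n} {x : DMVert n m} (h : (dmGraph T).Adj (.v j) x) :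
    x = .vhat ∨ ∃ l, x = .t l ∧ (T l).2.1 = j := by
  rw [dmGraph_adj] at h
  obtain ⟨-, h | h⟩ := h <;> cases x <;> simp [dmRel] at h ⊢ <;> tauto

lemma adj_w {j : Fin n} {x : DMVert n m} (h : (dmGraph T).Adj (.w j) x) :
    x = .what ∨ ∃ l, x = .t l ∧ (T l).2.2 = j := by
  rw [dmGraph_adj] at h
  obtain ⟨-, h | h⟩ := h <;> cases x <;> simp [dmRel] at h ⊢ <;> tauto

end DM

section Trees

variable {n m : ℕ} (T : Fin m → Fin n × Fin n × Fin n)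

def treeAAdj (i : Fin m) (x y : DMVert n m) : Prop :=
    (x = .uhat ∧ y = .u (T i).1) ∨ (x = .u (T i).1 ∧ y = .uhat) ∨
    (x = .vhat ∧ y = .v (T i).2.1) ∨ (x = .v (T i).2.1 ∧ y = .vhat) ∨
    (x = .what ∧ y = .w (T i).2.2) ∨ (x = .w (T i).2.2 ∧ y = .what) ∨
    (x = .that ∧ y = .t i) ∨ (x = .t i ∧ y = .that) ∨
    (x = .t i ∧ y = .u (T i).1) ∨ (x = .u (T i).1 ∧ y = .t i) ∨
    (x = .t i ∧ y = .v (T i).2.1) ∨ (x = .v (T i).2.1 ∧ y = .t i) ∨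
    (x = .t i ∧ y = .w (T i).2.2) ∨ (x = .w (T i).2.2 ∧ y = .t i)

def treeAVerts (i : Fin m) : Set (DMVert n m) :=
  {.uhat, .vhat, .what, .that, .t i, .u (T i).1, .v (T i).2.1, .w (T i).2.2}

lemma treeA_adj_sub {i : Fin m} {x y : DMVert n m} (h : treeAAdj T i x y) :
    (dmGraph T).Adj x y := by
  rw [dmGraph_adj]
  rcases h with ⟨rfl, rfl⟩|⟨rfl, rfl⟩|⟨rfl, rfl⟩|⟨rfl, rfl⟩|⟨rfl, rfl⟩|⟨rfl, rfl⟩|⟨rfl, rfl⟩|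
    ⟨rfl, rfl⟩|⟨rfl, rfl⟩|⟨rfl, rfl⟩|⟨rfl, rfl⟩|⟨rfl, rfl⟩|⟨rfl, rfl⟩|⟨rfl, rfl⟩ <;> simp [dmRel]

lemma treeA_edge_vert {i : Fin m} {x y : DMVert n m} (h : treeAAdj T i x y) :
    x ∈ treeAVerts T i := by
  unfold treeAVerts
  rcases h with ⟨rfl, -⟩|⟨rfl, -⟩|⟨rfl, -⟩|⟨rfl, -⟩|⟨rfl, -⟩|⟨rfl, -⟩|⟨rfl, -⟩|
    ⟨rfl, -⟩|⟨rfl, -⟩|⟨rfl, -⟩|⟨rfl, -⟩|⟨rfl, -⟩|⟨rfl, -⟩|⟨rfl, -⟩ <;> simp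

lemma treeA_symm {i : Fin m} {x y : DMVert n m} (h : treeAAdj T i x y) : treeAAdj T i y x := by
  unfold treeAAdj at h ⊢
  rcases h with ⟨rfl, rfl⟩|⟨rfl, rfl⟩|⟨rfl, rfl⟩|⟨rfl, rfl⟩|⟨rfl, rfl⟩|⟨rfl, rfl⟩|⟨rfl, rfl⟩|
    ⟨rfl, rfl⟩|⟨rfl, rfl⟩|⟨rfl, rfl⟩|⟨rfl, rfl⟩|⟨rfl, rfl⟩|⟨rfl, rfl⟩|⟨rfl, rfl⟩ <;> simp

/-- Tree of type A for matched triples. -/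
def treeA (i : Fin m) : (dmGraph T).Subgraph :=
  { verts := treeAVerts T i
    Adj := treeAAdj T i
    adj_sub := fun h => treeA_adj_sub T h
    edge_vert := fun h => treeA_edge_vert T h
    symm := ⟨fun _ _ h => treeA_symm T h⟩ }

def treeBAdj (i : Fin m) (j : Fin (m - n)) (x y : DMVert n m) : Prop :=
    (x = .uhat ∧ y = .a j) ∨ (x = .a j ∧ y = .uhat) ∨
    (x = .vhat ∧ y = .a j) ∨ (x = .a j ∧ y = .vhat) ∨
    (x = .what ∧ y = .a j) ∨ (x = .a j ∧ y = .what) ∨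
    (x = .that ∧ y = .t i) ∨ (x = .t i ∧ y = .that) ∨
    (x = .t i ∧ y = .a j) ∨ (x = .a j ∧ y = .t i)

def treeBVerts (i : Fin m) (j : Fin (m - n)) : Set (DMVert n m) :=
  ({.uhat, .vhat, .what, .that, .t i, .a j} : Set (DMVert n m))

lemma treeB_adj_sub {i : Fin m} {j : Fin (m - n)} {x y : DMVert n m} (h : treeBAdj i j x y) :
    (dmGraph T).Adj x y := by
  rw [dmGraph_adj]
  rcases h with ⟨rfl, rfl⟩|⟨rfl, rfl⟩|⟨rfl, rfl⟩|⟨rfl, rfl⟩|⟨rfl, rfl⟩|⟨rfl, rfl⟩|⟨rfl, rfl⟩|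
    ⟨rfl, rfl⟩|⟨rfl, rfl⟩|⟨rfl, rfl⟩ <;> simp [dmRel]

lemma treeB_edge_vert {i : Fin m} {j : Fin (m - n)} {x y : DMVert n m} (h : treeBAdj i j x y) :
    x ∈ treeBVerts i j := by
  unfold treeBVerts
  rcases h with ⟨rfl, -⟩|⟨rfl, -⟩|⟨rfl, -⟩|⟨rfl, -⟩|⟨rfl, -⟩|⟨rfl, -⟩|⟨rfl, -⟩|
    ⟨rfl, -⟩|⟨rfl, -⟩|⟨rfl, -⟩ <;> simp

lemma treeB_symm {i : Fin m} {j : Fin (m - n)} {x y : DMVert n m} (h : treeBAdj i j x y) :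
    treeBAdj i j y x := by
  unfold treeBAdj at h ⊢
  rcases h with ⟨rfl, rfl⟩|⟨rfl, rfl⟩|⟨rfl, rfl⟩|⟨rfl, rfl⟩|⟨rfl, rfl⟩|⟨rfl, rfl⟩|⟨rfl, rfl⟩|
    ⟨rfl, rfl⟩|⟨rfl, rfl⟩|⟨rfl, rfl⟩ <;> simp

/-- Tree of type B for unmatched triples. -/
def treeB (i : Fin m) (j : Fin (m - n)) : (dmGraph T).Subgraph :=
  { verts := treeBVerts i j
    Adj := treeBAdj i j
    adj_sub := fun h => treeB_adj_sub T h
    edge_vert := fun h => treeB_edge_vert h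
    symm := ⟨fun _ _ h => treeB_symm h⟩ }

variable {T}

lemma treeA_adj_uhat {i : Fin m} {x : DMVert n m} (h : (treeA T i).Adj .uhat x) :
    x = .u (T i).1 := by
  rcases h with ⟨-, rfl⟩|⟨h, -⟩|⟨h, -⟩|⟨h, -⟩|⟨h, -⟩|⟨h, -⟩|⟨h, -⟩|⟨h, -⟩|⟨h, -⟩|⟨h, -⟩|⟨h, -⟩|
    ⟨h, -⟩|⟨h, -⟩|⟨h, -⟩ <;> first | rfl | (exact absurd h (by simp))

lemma treeA_adj_vhat {i : Fin m} {x : DMVert n m} (h : (treeA T i).Adj .vhat x) :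
    x = .v (T i).2.1 := by
  rcases h with ⟨h, -⟩|⟨h, -⟩|⟨-, rfl⟩|⟨h, -⟩|⟨h, -⟩|⟨h, -⟩|⟨h, -⟩|⟨h, -⟩|⟨h, -⟩|⟨h, -⟩|⟨h, -⟩|
    ⟨h, -⟩|⟨h, -⟩|⟨h, -⟩ <;> first | rfl | (exact absurd h (by simp))

lemma treeA_adj_what {i : Fin m} {x : DMVert n m} (h : (treeA T i).Adj .what x) :
    x = .w (T i).2.2 := by
  rcases h with ⟨h, -⟩|⟨h, -⟩|⟨h, -⟩|⟨h, -⟩|⟨-, rfl⟩|⟨h, -⟩|⟨h, -⟩|⟨h, -⟩|⟨h, -⟩|⟨h, -⟩|⟨h, -⟩|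
    ⟨h, -⟩|⟨h, -⟩|⟨h, -⟩ <;> first | rfl | (exact absurd h (by simp))

lemma treeA_adj_that {i : Fin m} {x : DMVert n m} (h : (treeA T i).Adj .that x) :
    x = .t i := by
  rcases h with ⟨h, -⟩|⟨h, -⟩|⟨h, -⟩|⟨h, -⟩|⟨h, -⟩|⟨h, -⟩|⟨-, rfl⟩|⟨h, -⟩|⟨h, -⟩|⟨h, -⟩|⟨h, -⟩|
    ⟨h, -⟩|⟨h, -⟩|⟨h, -⟩ <;> first | rfl | (exact absurd h (by simp))

lemma treeA_adj_u {i : Fin m} {jj : Fin n} {x : DMVert n m} (h : (treeA T i).Adj (.u jj) x) :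
    x = .uhat ∨ x = .t i := by
  rcases h with ⟨h, rfl⟩|⟨h, rfl⟩|⟨h, -⟩|⟨h, -⟩|⟨h, -⟩|⟨h, -⟩|⟨h, -⟩|⟨h, -⟩|⟨h, -⟩|⟨h, rfl⟩|
    ⟨h, -⟩|⟨h, -⟩|⟨h, -⟩|⟨h, -⟩ <;> first | (left; rfl) | (right; rfl) | (exact absurd h (by simp))

lemma treeA_adj_v {i : Fin m} {jj : Fin n} {x : DMVert n m} (h : (treeA T i).Adj (.v jj) x) :
    x = .vhat ∨ x = .t i := by
  rcases h with ⟨h, -⟩|⟨h, -⟩|⟨h, rfl⟩|⟨h, rfl⟩|⟨h, -⟩|⟨h, -⟩|⟨h, -⟩|⟨h, -⟩|⟨h, -⟩|⟨h, -⟩|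
    ⟨h, -⟩|⟨h, rfl⟩|⟨h, -⟩|⟨h, -⟩ <;> first | (left; rfl) | (right; rfl) | (exact absurd h (by simp))

lemma treeA_adj_w {i : Fin m} {jj : Fin n} {x : DMVert n m} (h : (treeA T i).Adj (.w jj) x) :
    x = .what ∨ x = .t i := by
  rcases h with ⟨h, -⟩|⟨h, -⟩|⟨h, -⟩|⟨h, -⟩|⟨h, rfl⟩|⟨h, rfl⟩|⟨h, -⟩|⟨h, -⟩|⟨h, -⟩|⟨h, -⟩|
    ⟨h, -⟩|⟨h, -⟩|⟨h, -⟩|⟨h, rfl⟩ <;> first | (left; rfl) | (right; rfl) | (exact absurd h (by simp))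

lemma treeA_adj_t {i : Fin m} {x : DMVert n m} (h : (treeA T i).Adj (.t i) x) :
    x = .that ∨ x = .u (T i).1 ∨ x = .v (T i).2.1 ∨ x = .w (T i).2.2 := by
  rcases h with ⟨h, -⟩|⟨h, -⟩|⟨h, -⟩|⟨h, -⟩|⟨h, -⟩|⟨h, -⟩|⟨h, -⟩|⟨-, rfl⟩|⟨-, rfl⟩|⟨h, -⟩|
    ⟨-, rfl⟩|⟨h, -⟩|⟨-, rfl⟩|⟨h, -⟩ <;> first | tauto | (exact absurd h (by simp))

lemma treeB_adj_uhat' {i : Fin m} {j : Fin (m - n)} {x : DMVert n m}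
    (h : (treeB T i j).Adj .uhat x) : x = .a j := by
  rcases h with ⟨-, rfl⟩|⟨h, -⟩|⟨h, -⟩|⟨h, -⟩|⟨h, -⟩|⟨h, -⟩|⟨h, -⟩|⟨h, -⟩|⟨h, -⟩|⟨h, -⟩ <;>
    first | rfl | (exact absurd h (by simp))

lemma treeB_adj_vhat' {i : Fin m} {j : Fin (m - n)} {x : DMVert n m}
    (h : (treeB T i j).Adj .vhat x) : x = .a j := by
  rcases h with ⟨h, -⟩|⟨h, -⟩|⟨-, rfl⟩|⟨h, -⟩|⟨h, -⟩|⟨h, -⟩|⟨h, -⟩|⟨h, -⟩|⟨h, -⟩|⟨h, -⟩ <;>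
    first | rfl | (exact absurd h (by simp))

lemma treeB_adj_what' {i : Fin m} {j : Fin (m - n)} {x : DMVert n m}
    (h : (treeB T i j).Adj .what x) : x = .a j := by
  rcases h with ⟨h, -⟩|⟨h, -⟩|⟨h, -⟩|⟨h, -⟩|⟨-, rfl⟩|⟨h, -⟩|⟨h, -⟩|⟨h, -⟩|⟨h, -⟩|⟨h, -⟩ <;>
    first | rfl | (exact absurd h (by simp))

lemma treeB_adj_that' {i : Fin m} {j : Fin (m - n)} {x : DMVert n m}
    (h : (treeB T i j).Adj .that x) : x = .t i := by
  rcases h with ⟨h, -⟩|⟨h, -⟩|⟨h, -⟩|⟨h, -⟩|⟨h, -⟩|⟨h, -⟩|⟨-, rfl⟩|⟨h, -⟩|⟨h, -⟩|⟨h, -⟩ <;>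
    first | rfl | (exact absurd h (by simp))

lemma treeB_adj_t' {i : Fin m} {j : Fin (m - n)} {x : DMVert n m}
    (h : (treeB T i j).Adj (.t i) x) : x = .that ∨ x = .a j := by
  rcases h with ⟨h, -⟩|⟨h, -⟩|⟨h, -⟩|⟨h, -⟩|⟨h, -⟩|⟨h, -⟩|⟨h, -⟩|⟨-, rfl⟩|⟨-, rfl⟩|⟨h, -⟩ <;>
    first | tauto | (exact absurd h (by simp))

lemma treeB_adj_a' {i : Fin m} {j : Fin (m - n)} {x : DMVert n m}
    (h : (treeB T i j).Adj (.a j) x) : x = .uhat ∨ x = .vhat ∨ x = .what ∨ x = .t i := by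
  rcases h with ⟨h, -⟩|⟨-, rfl⟩|⟨h, -⟩|⟨-, rfl⟩|⟨h, -⟩|⟨-, rfl⟩|⟨h, -⟩|⟨h, -⟩|⟨h, -⟩|⟨-, rfl⟩ <;>
    first | tauto | (exact absurd h (by simp))

end Trees

section TreeProofs

variable {n m : ℕ} {T : Fin m → Fin n × Fin n × Fin n}

lemma treeA_isTree (i : Fin m) : ((treeA T i).coe).IsTree := by
  classical
  have hhub : (DMVert.t i : DMVert n m) ∈ (treeA T i).verts := by simp [treeA, treeAVerts]
  have huh : (DMVert.uhat : DMVert n m) ∈ (treeA T i).verts := by simp [treeA, treeAVerts]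
  have hvh : (DMVert.vhat : DMVert n m) ∈ (treeA T i).verts := by simp [treeA, treeAVerts]
  have hwh : (DMVert.what : DMVert n m) ∈ (treeA T i).verts := by simp [treeA, treeAVerts]
  have hth : (DMVert.that : DMVert n m) ∈ (treeA T i).verts := by simp [treeA, treeAVerts]
  have huu : (DMVert.u (T i).1 : DMVert n m) ∈ (treeA T i).verts := by simp [treeA, treeAVerts]
  have hvv : (DMVert.v (T i).2.1 : DMVert n m) ∈ (treeA T i).verts := by simp [treeA, treeAVerts]
  have hww : (DMVert.w (T i).2.2 : DMVert n m) ∈ (treeA T i).verts := by simp [treeA, treeAVerts]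
  have hadj : ∀ (x y : DMVert n m) (hx : x ∈ (treeA T i).verts) (hy : y ∈ (treeA T i).verts),
      treeAAdj T i x y → (treeA T i).coe.Adj ⟨x, hx⟩ ⟨y, hy⟩ := by
    intro x y hx hy h
    rw [Subgraph.coe_adj]
    exact h
  have hr : ∀ z : (treeA T i).verts, (treeA T i).coe.Reachable z ⟨.t i, hhub⟩ := by
    rintro ⟨z, hz⟩
    have hz' : z = DMVert.uhat ∨ z = .vhat ∨ z = .what ∨ z = .that ∨ z = .t i ∨
        z = .u (T i).1 ∨ z = .v (T i).2.1 ∨ z = .w (T i).2.2 := by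
      simpa [treeA, treeAVerts] using hz
    rcases hz' with rfl|rfl|rfl|rfl|rfl|rfl|rfl|rfl
    · exact ((hadj _ _ huh huu (by simp [treeAAdj])).reachable).trans
        ((hadj _ _ huu hhub (by simp [treeAAdj])).reachable)
    · exact ((hadj _ _ hvh hvv (by simp [treeAAdj])).reachable).trans
        ((hadj _ _ hvv hhub (by simp [treeAAdj])).reachable)
    · exact ((hadj _ _ hwh hww (by simp [treeAAdj])).reachable).trans
        ((hadj _ _ hww hhub (by simp [treeAAdj])).reachable)
    · exact (hadj _ _ hth hhub (by simp [treeAAdj])).reachable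
    · exact Reachable.refl _
    · exact (hadj _ _ huu hhub (by simp [treeAAdj])).reachable
    · exact (hadj _ _ hvv hhub (by simp [treeAAdj])).reachable
    · exact (hadj _ _ hww hhub (by simp [treeAAdj])).reachable
  constructor
  · rw [connected_iff]
    exact ⟨fun a b => (hr a).trans (hr b).symm, ⟨⟨_, hhub⟩⟩⟩
  · intro v c hc
    have h_uhat : ∀ z : (treeA T i).verts, z.1 = .uhat → z ∉ c.support := by
      rintro z hz hmem
      obtain ⟨x, y, hxy, hx, hy, -, -⟩ := hc.two_neighbors hmem
      rw [Subgraph.coe_adj] at hx hy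
      rw [hz] at hx hy
      exact hxy (Subtype.ext ((treeA_adj_uhat hx).trans (treeA_adj_uhat hy).symm))
    have h_vhat : ∀ z : (treeA T i).verts, z.1 = .vhat → z ∉ c.support := by
      rintro z hz hmem
      obtain ⟨x, y, hxy, hx, hy, -, -⟩ := hc.two_neighbors hmem
      rw [Subgraph.coe_adj] at hx hy
      rw [hz] at hx hy
      exact hxy (Subtype.ext ((treeA_adj_vhat hx).trans (treeA_adj_vhat hy).symm))
    have h_what : ∀ z : (treeA T i).verts, z.1 = .what → z ∉ c.support := by
      rintro z hz hmem
      obtain ⟨x, y, hxy, hx, hy, -, -⟩ := hc.two_neighbors hmem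
      rw [Subgraph.coe_adj] at hx hy
      rw [hz] at hx hy
      exact hxy (Subtype.ext ((treeA_adj_what hx).trans (treeA_adj_what hy).symm))
    have h_that : ∀ z : (treeA T i).verts, z.1 = .that → z ∉ c.support := by
      rintro z hz hmem
      obtain ⟨x, y, hxy, hx, hy, -, -⟩ := hc.two_neighbors hmem
      rw [Subgraph.coe_adj] at hx hy
      rw [hz] at hx hy
      exact hxy (Subtype.ext ((treeA_adj_that hx).trans (treeA_adj_that hy).symm))
    have h_u : ∀ z : (treeA T i).verts, (∃ jj, z.1 = .u jj) → z ∉ c.support := by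
      rintro z ⟨jj, hz⟩ hmem
      obtain ⟨x, y, hxy, hx, hy, hxs, hys⟩ := hc.two_neighbors hmem
      rw [Subgraph.coe_adj] at hx hy
      rw [hz] at hx hy
      rcases treeA_adj_u hx with h1 | h1
      · exact h_uhat x h1 hxs
      rcases treeA_adj_u hy with h2 | h2
      · exact h_uhat y h2 hys
      exact hxy (Subtype.ext (h1.trans h2.symm))
    have h_v : ∀ z : (treeA T i).verts, (∃ jj, z.1 = .v jj) → z ∉ c.support := by
      rintro z ⟨jj, hz⟩ hmem
      obtain ⟨x, y, hxy, hx, hy, hxs, hys⟩ := hc.two_neighbors hmem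
      rw [Subgraph.coe_adj] at hx hy
      rw [hz] at hx hy
      rcases treeA_adj_v hx with h1 | h1
      · exact h_vhat x h1 hxs
      rcases treeA_adj_v hy with h2 | h2
      · exact h_vhat y h2 hys
      exact hxy (Subtype.ext (h1.trans h2.symm))
    have h_w : ∀ z : (treeA T i).verts, (∃ jj, z.1 = .w jj) → z ∉ c.support := by
      rintro z ⟨jj, hz⟩ hmem
      obtain ⟨x, y, hxy, hx, hy, hxs, hys⟩ := hc.two_neighbors hmem
      rw [Subgraph.coe_adj] at hx hy
      rw [hz] at hx hy
      rcases treeA_adj_w hx with h1 | h1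
      · exact h_what x h1 hxs
      rcases treeA_adj_w hy with h2 | h2
      · exact h_what y h2 hys
      exact hxy (Subtype.ext (h1.trans h2.symm))
    have h_t : ∀ z : (treeA T i).verts, z.1 = .t i → z ∉ c.support := by
      rintro z hz hmem
      obtain ⟨x, y, hxy, hx, hy, hxs, hys⟩ := hc.two_neighbors hmem
      rw [Subgraph.coe_adj] at hx hy
      rw [hz] at hx hy
      rcases treeA_adj_t hx with h1 | h1 | h1 | h1
      · exact h_that x h1 hxs
      · exact h_u x ⟨_, h1⟩ hxs
      · exact h_v x ⟨_, h1⟩ hxs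
      · exact h_w x ⟨_, h1⟩ hxs
    have hv := c.start_mem_support
    have hz' : v.1 = DMVert.uhat ∨ v.1 = .vhat ∨ v.1 = .what ∨ v.1 = .that ∨ v.1 = .t i ∨
        v.1 = .u (T i).1 ∨ v.1 = .v (T i).2.1 ∨ v.1 = .w (T i).2.2 := by
      have h2 : v.1 ∈ (treeA T i).verts := v.2
      simpa only [treeA, treeAVerts, Set.mem_insert_iff, Set.mem_singleton_iff] using h2
    rcases hz' with h|h|h|h|h|h|h|h
    · exact h_uhat v h hv
    · exact h_vhat v h hv
    · exact h_what v h hv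
    · exact h_that v h hv
    · exact h_t v h hv
    · exact h_u v ⟨_, h⟩ hv
    · exact h_v v ⟨_, h⟩ hv
    · exact h_w v ⟨_, h⟩ hv

end TreeProofs

section TreeBProof

variable {n m : ℕ} {T : Fin m → Fin n × Fin n × Fin n}

lemma treeB_isTree (i : Fin m) (j : Fin (m - n)) : ((treeB T i j).coe).IsTree := by
  classical
  have hhub : (DMVert.a j : DMVert n m) ∈ (treeB T i j).verts := by simp [treeB, treeBVerts]
  have huh : (DMVert.uhat : DMVert n m) ∈ (treeB T i j).verts := by simp [treeB, treeBVerts]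
  have hvh : (DMVert.vhat : DMVert n m) ∈ (treeB T i j).verts := by simp [treeB, treeBVerts]
  have hwh : (DMVert.what : DMVert n m) ∈ (treeB T i j).verts := by simp [treeB, treeBVerts]
  have hth : (DMVert.that : DMVert n m) ∈ (treeB T i j).verts := by simp [treeB, treeBVerts]
  have htt : (DMVert.t i : DMVert n m) ∈ (treeB T i j).verts := by simp [treeB, treeBVerts]
  have hadj : ∀ (x y : DMVert n m) (hx : x ∈ (treeB T i j).verts) (hy : y ∈ (treeB T i j).verts),
      treeBAdj i j x y → (treeB T i j).coe.Adj ⟨x, hx⟩ ⟨y, hy⟩ := by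
    intro x y hx hy h
    rw [Subgraph.coe_adj]
    exact h
  have hr : ∀ z : (treeB T i j).verts, (treeB T i j).coe.Reachable z ⟨.a j, hhub⟩ := by
    rintro ⟨z, hz⟩
    have hz' : z = DMVert.uhat ∨ z = .vhat ∨ z = .what ∨ z = .that ∨ z = .t i ∨ z = .a j := by
      simpa [treeB, treeBVerts] using hz
    rcases hz' with rfl|rfl|rfl|rfl|rfl|rfl
    · exact (hadj _ _ huh hhub (by simp [treeBAdj])).reachable
    · exact (hadj _ _ hvh hhub (by simp [treeBAdj])).reachable
    · exact (hadj _ _ hwh hhub (by simp [treeBAdj])).reachable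
    · exact ((hadj _ _ hth htt (by simp [treeBAdj])).reachable).trans
        ((hadj _ _ htt hhub (by simp [treeBAdj])).reachable)
    · exact (hadj _ _ htt hhub (by simp [treeBAdj])).reachable
    · exact Reachable.refl _
  constructor
  · rw [connected_iff]
    exact ⟨fun a b => (hr a).trans (hr b).symm, ⟨⟨_, hhub⟩⟩⟩
  · intro v c hc
    have h_uhat : ∀ z : (treeB T i j).verts, z.1 = .uhat → z ∉ c.support := by
      rintro z hz hmem
      obtain ⟨x, y, hxy, hx, hy, -, -⟩ := hc.two_neighbors hmem
      rw [Subgraph.coe_adj] at hx hy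
      rw [hz] at hx hy
      exact hxy (Subtype.ext ((treeB_adj_uhat' hx).trans (treeB_adj_uhat' hy).symm))
    have h_vhat : ∀ z : (treeB T i j).verts, z.1 = .vhat → z ∉ c.support := by
      rintro z hz hmem
      obtain ⟨x, y, hxy, hx, hy, -, -⟩ := hc.two_neighbors hmem
      rw [Subgraph.coe_adj] at hx hy
      rw [hz] at hx hy
      exact hxy (Subtype.ext ((treeB_adj_vhat' hx).trans (treeB_adj_vhat' hy).symm))
    have h_what : ∀ z : (treeB T i j).verts, z.1 = .what → z ∉ c.support := by
      rintro z hz hmem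
      obtain ⟨x, y, hxy, hx, hy, -, -⟩ := hc.two_neighbors hmem
      rw [Subgraph.coe_adj] at hx hy
      rw [hz] at hx hy
      exact hxy (Subtype.ext ((treeB_adj_what' hx).trans (treeB_adj_what' hy).symm))
    have h_that : ∀ z : (treeB T i j).verts, z.1 = .that → z ∉ c.support := by
      rintro z hz hmem
      obtain ⟨x, y, hxy, hx, hy, -, -⟩ := hc.two_neighbors hmem
      rw [Subgraph.coe_adj] at hx hy
      rw [hz] at hx hy
      exact hxy (Subtype.ext ((treeB_adj_that' hx).trans (treeB_adj_that' hy).symm))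
    have h_t : ∀ z : (treeB T i j).verts, z.1 = .t i → z ∉ c.support := by
      rintro z hz hmem
      obtain ⟨x, y, hxy, hx, hy, hxs, hys⟩ := hc.two_neighbors hmem
      rw [Subgraph.coe_adj] at hx hy
      rw [hz] at hx hy
      rcases treeB_adj_t' hx with h1 | h1
      · exact h_that x h1 hxs
      rcases treeB_adj_t' hy with h2 | h2
      · exact h_that y h2 hys
      exact hxy (Subtype.ext (h1.trans h2.symm))
    have h_a : ∀ z : (treeB T i j).verts, z.1 = .a j → z ∉ c.support := by
      rintro z hz hmem
      obtain ⟨x, y, hxy, hx, hy, hxs, hys⟩ := hc.two_neighbors hmem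
      rw [Subgraph.coe_adj] at hx hy
      rw [hz] at hx hy
      rcases treeB_adj_a' hx with h1 | h1 | h1 | h1
      · exact h_uhat x h1 hxs
      · exact h_vhat x h1 hxs
      · exact h_what x h1 hxs
      · exact h_t x h1 hxs
    have hv := c.start_mem_support
    have hz' : v.1 = DMVert.uhat ∨ v.1 = .vhat ∨ v.1 = .what ∨ v.1 = .that ∨ v.1 = .t i ∨
        v.1 = .a j := by
      have h2 : v.1 ∈ (treeB T i j).verts := v.2
      simpa only [treeB, treeBVerts, Set.mem_insert_iff, Set.mem_singleton_iff] using h2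
    rcases hz' with h|h|h|h|h|h
    · exact h_uhat v h hv
    · exact h_vhat v h hv
    · exact h_what v h hv
    · exact h_that v h hv
    · exact h_t v h hv
    · exact h_a v h hv

end TreeBProof

section Disj

variable {n m : ℕ} {T : Fin m → Fin n × Fin n × Fin n}

lemma vertsAA {i j : Fin m} (hij : i ≠ j) (h1 : (T i).1 ≠ (T j).1)
    (h2 : (T i).2.1 ≠ (T j).2.1) (h3 : (T i).2.2 ≠ (T j).2.2) :
    (treeA T i).verts ∩ (treeA T j).verts = dmS n m := by
  ext x
  simp only [treeA, treeAVerts, dmS, Set.mem_inter_iff, Set.mem_insert_iff,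
    Set.mem_singleton_iff]
  constructor
  · rintro ⟨ha, hb⟩
    rcases ha with rfl|rfl|rfl|rfl|rfl|rfl|rfl|rfl <;> simp_all
  · rintro (rfl|rfl|rfl|rfl) <;> simp

lemma vertsAB {i i' : Fin m} {j' : Fin (m - n)} (hii : i ≠ i') :
    (treeA T i).verts ∩ (treeB T i' j').verts = dmS n m := by
  ext x
  simp only [treeA, treeAVerts, treeB, treeBVerts, dmS, Set.mem_inter_iff, Set.mem_insert_iff,
    Set.mem_singleton_iff]
  constructor
  · rintro ⟨ha, hb⟩
    rcases ha with rfl|rfl|rfl|rfl|rfl|rfl|rfl|rfl <;> simp_all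
  · rintro (rfl|rfl|rfl|rfl) <;> simp

lemma vertsBA {i i' : Fin m} {j' : Fin (m - n)} (hii : i' ≠ i) :
    (treeB T i' j').verts ∩ (treeA T i).verts = dmS n m := by
  rw [Set.inter_comm]; exact vertsAB hii.symm

lemma vertsBB {i i' : Fin m} {j j' : Fin (m - n)} (hii : i ≠ i') (hjj : j ≠ j') :
    (treeB T i j).verts ∩ (treeB T i' j').verts = dmS n m := by
  ext x
  simp only [treeB, treeBVerts, dmS, Set.mem_inter_iff, Set.mem_insert_iff,
    Set.mem_singleton_iff]
  constructor
  · rintro ⟨ha, hb⟩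
    rcases ha with rfl|rfl|rfl|rfl|rfl|rfl <;> simp_all
  · rintro (rfl|rfl|rfl|rfl) <;> simp

lemma edgesAA {i j : Fin m} (hij : i ≠ j) (h1 : (T i).1 ≠ (T j).1)
    (h2 : (T i).2.1 ≠ (T j).2.1) (h3 : (T i).2.2 ≠ (T j).2.2) :
    Disjoint (treeA T i).edgeSet (treeA T j).edgeSet := by
  rw [Set.disjoint_left]
  intro ed hei hej
  induction ed using Sym2.ind with
  | _ x y =>
    rw [Subgraph.mem_edgeSet] at hei hej
    have hej' : treeAAdj T j x y := hej
    rcases hei with ⟨rfl,rfl⟩|⟨rfl,rfl⟩|⟨rfl,rfl⟩|⟨rfl,rfl⟩|⟨rfl,rfl⟩|⟨rfl,rfl⟩|⟨rfl,rfl⟩|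
      ⟨rfl,rfl⟩|⟨rfl,rfl⟩|⟨rfl,rfl⟩|⟨rfl,rfl⟩|⟨rfl,rfl⟩|⟨rfl,rfl⟩|⟨rfl,rfl⟩ <;>
      simp [treeAAdj, hij, h1, h2, h3, hij.symm, h1.symm, h2.symm, h3.symm] at hej'

lemma edgesAB {i i' : Fin m} {j' : Fin (m - n)} (hii : i ≠ i') :
    Disjoint (treeA T i).edgeSet (treeB T i' j').edgeSet := by
  rw [Set.disjoint_left]
  intro ed hei hej
  induction ed using Sym2.ind with
  | _ x y =>
    rw [Subgraph.mem_edgeSet] at hei hej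
    have hej' : treeBAdj i' j' x y := hej
    rcases hei with ⟨rfl,rfl⟩|⟨rfl,rfl⟩|⟨rfl,rfl⟩|⟨rfl,rfl⟩|⟨rfl,rfl⟩|⟨rfl,rfl⟩|⟨rfl,rfl⟩|
      ⟨rfl,rfl⟩|⟨rfl,rfl⟩|⟨rfl,rfl⟩|⟨rfl,rfl⟩|⟨rfl,rfl⟩|⟨rfl,rfl⟩|⟨rfl,rfl⟩ <;>
      simp [treeBAdj, hii, hii.symm] at hej'

lemma edgesBB {i i' : Fin m} {j j' : Fin (m - n)} (hii : i ≠ i') (hjj : j ≠ j') :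
    Disjoint (treeB T i j).edgeSet (treeB T i' j').edgeSet := by
  rw [Set.disjoint_left]
  intro ed hei hej
  induction ed using Sym2.ind with
  | _ x y =>
    rw [Subgraph.mem_edgeSet] at hei hej
    have hej' : treeBAdj i' j' x y := hej
    rcases hei with ⟨rfl,rfl⟩|⟨rfl,rfl⟩|⟨rfl,rfl⟩|⟨rfl,rfl⟩|⟨rfl,rfl⟩|⟨rfl,rfl⟩|⟨rfl,rfl⟩|
      ⟨rfl,rfl⟩|⟨rfl,rfl⟩|⟨rfl,rfl⟩ <;>
      simp [treeBAdj, hii, hjj, hii.symm, hjj.symm] at hej'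

end Disj

section Backward

variable {n m : ℕ} {T : Fin m → Fin n × Fin n × Fin n}

lemma backward_dir (hn : 1 ≤ n) (hmn : n ≤ m) (M : Finset (Fin m)) (hcard : M.card = n)
    (hM : ∀ i ∈ M, ∀ j ∈ M, i ≠ j →
      (T i).1 ≠ (T j).1 ∧ (T i).2.1 ≠ (T j).2.1 ∧ (T i).2.2 ≠ (T j).2.2) :
    ∃ F : Fin m → (dmGraph T).Subgraph, IsIDTrees (dmGraph T) (dmS n m) F := by
  classical
  have hcompl : Fintype.card {x // x ∈ Mᶜ} = m - n := by
    simp [Finset.card_compl, hcard]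
  let e := Fintype.equivFinOfCardEq hcompl
  refine ⟨fun i => if h : i ∈ M then treeA T i else treeB T i (e ⟨i, by simpa using h⟩),
    ?_, ?_⟩
  · intro i
    dsimp only
    by_cases hi : i ∈ M
    · rw [dif_pos hi]
      refine ⟨?_, treeA_isTree i⟩
      intro x hx
      rcases hx with rfl|rfl|rfl|rfl <;> simp [treeA, treeAVerts]
    · rw [dif_neg hi]
      refine ⟨?_, treeB_isTree i _⟩
      intro x hx
      rcases hx with rfl|rfl|rfl|rfl <;> simp [treeB, treeBVerts]
  · intro i j hij
    dsimp only
    by_cases hi : i ∈ M <;> by_cases hj : j ∈ M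
    · rw [dif_pos hi, dif_pos hj]
      obtain ⟨h1, h2, h3⟩ := hM i hi j hj hij
      exact ⟨vertsAA hij h1 h2 h3, edgesAA hij h1 h2 h3⟩
    · rw [dif_pos hi, dif_neg hj]
      exact ⟨vertsAB hij, edgesAB hij⟩
    · rw [dif_neg hi, dif_pos hj]
      refine ⟨vertsBA hij, ?_⟩
      exact (edgesAB hij.symm).symm
    · rw [dif_neg hi, dif_neg hj]
      have hjj : e ⟨i, by simpa using hi⟩ ≠ e ⟨j, by simpa using hj⟩ := by
        intro h
        exact hij (congrArg Subtype.val (e.injective h))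
      exact ⟨vertsBB hij hjj, edgesBB hij hjj⟩

end Backward

section Forward

variable {n m : ℕ} {T : Fin m → Fin n × Fin n × Fin n}

lemma adj_vhat' {x : DMVert n m} (h : (dmGraph T).Adj .vhat x) :
    (∃ i, x = .v i) ∨ (∃ j, x = .a j) := by
  rw [dmGraph_adj] at h
  obtain ⟨-, h | h⟩ := h <;> cases x <;> simp [dmRel] at h ⊢

lemma adj_what' {x : DMVert n m} (h : (dmGraph T).Adj .what x) :
    (∃ i, x = .w i) ∨ (∃ j, x = .a j) := by
  rw [dmGraph_adj] at h
  obtain ⟨-, h | h⟩ := h <;> cases x <;> simp [dmRel] at h ⊢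

lemma forward_dir (hn : 1 ≤ n) (hmn : n ≤ m)
    (F : Fin m → (dmGraph T).Subgraph) (hF : IsIDTrees (dmGraph T) (dmS n m) F) :
    ∃ M : Finset (Fin m), M.card = n ∧
      ∀ i ∈ M, ∀ j ∈ M, i ≠ j →
        (T i).1 ≠ (T j).1 ∧ (T i).2.1 ≠ (T j).2.1 ∧ (T i).2.2 ≠ (T j).2.2 := by
  classical
  have hS : ∀ k, dmS n m ⊆ (F k).verts := fun k => (hF.1 k).1
  have htree : ∀ k, ((F k).coe).IsTree := fun k => (hF.1 k).2
  have loc : ∀ {x : DMVert n m}, x ∉ dmS n m → ∀ {k k' : Fin m},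
      x ∈ (F k).verts → x ∈ (F k').verts → k = k' := by
    intro x hx k k' hk hk'
    by_contra hne
    have h := (hF.2 k k' hne).1
    exact hx (h ▸ (⟨hk, hk'⟩ : x ∈ (F k).verts ∩ (F k').verts))
  have tnotS : ∀ i : Fin m, (DMVert.t i : DMVert n m) ∉ dmS n m := by intro i; simp [dmS]
  have unotS : ∀ i : Fin n, (DMVert.u i : DMVert n m) ∉ dmS n m := by intro i; simp [dmS]
  have vnotS : ∀ i : Fin n, (DMVert.v i : DMVert n m) ∉ dmS n m := by intro i; simp [dmS]
  have wnotS : ∀ i : Fin n, (DMVert.w i : DMVert n m) ∉ dmS n m := by intro i; simp [dmS]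
  have anotS : ∀ j : Fin (m - n), (DMVert.a j : DMVert n m) ∉ dmS n m := by intro j; simp [dmS]
  have hthat : ∀ k, (DMVert.that : DMVert n m) ∈ (F k).verts :=
    fun k => hS k (by simp [dmS])
  have huhat : ∀ k, (DMVert.uhat : DMVert n m) ∈ (F k).verts :=
    fun k => hS k (by simp [dmS])
  have hvhat : ∀ k, (DMVert.vhat : DMVert n m) ∈ (F k).verts :=
    fun k => hS k (by simp [dmS])
  have hwhat : ∀ k, (DMVert.what : DMVert n m) ∈ (F k).verts :=
    fun k => hS k (by simp [dmS])
  -- each tree contains a t-vertex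
  have tv : ∀ k, ∃ i, (DMVert.t i : DMVert n m) ∈ (F k).verts := by
    intro k
    obtain ⟨p⟩ := (htree k).isConnected.preconnected ⟨.that, hthat k⟩ ⟨.uhat, huhat k⟩
    cases p with
    | cons h q =>
      rename_i b
      rw [Subgraph.coe_adj] at h
      obtain ⟨i, hi⟩ := adj_that T ((F k).adj_sub h)
      exact ⟨i, hi ▸ b.2⟩
  choose σ hσ using tv
  have hinj : Function.Injective σ := by
    intro k k' h
    exact loc (tnotS _) (hσ k) (h ▸ hσ k')
  have hsurj : Function.Surjective σ := Finite.surjective_of_injective hinj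
  have t_unique : ∀ {i : Fin m} {k : Fin m}, (DMVert.t i : DMVert n m) ∈ (F k).verts →
      i = σ k := by
    intro i k hik
    obtain ⟨k', hk'⟩ := hsurj i
    have : k = k' := loc (tnotS i) hik (hk' ▸ hσ k')
    rw [this, ← hk']
  -- counting a-free trees
  let A : Finset (Fin m) := Finset.univ.filter (fun k => ∃ j, (DMVert.a j : DMVert n m) ∈ (F k).verts)
  let g : Fin m → Option (Fin (m - n)) := fun k =>
    if h : ∃ j, (DMVert.a j : DMVert n m) ∈ (F k).verts then some h.choose else none
  have hginj : Set.InjOn g A := by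
    intro k hk k' hk' hgk
    simp only [A, Finset.mem_coe, Finset.mem_filter] at hk hk'
    rw [show g k = some hk.2.choose from dif_pos hk.2,
      show g k' = some hk'.2.choose from dif_pos hk'.2] at hgk
    have hj := Option.some_injective _ hgk
    exact loc (anotS _) hk.2.choose_spec (hj ▸ hk'.2.choose_spec)
  have hAcard : A.card ≤ m - n := by
    have h1 : A.card = (A.image g).card := (Finset.card_image_of_injOn hginj).symm
    have h2 : A.image g ⊆ (Finset.univ : Finset (Fin (m - n))).image some := by
      intro x hx
      rw [Finset.mem_image] at hx
      obtain ⟨k, hk, rfl⟩ := hx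
      rw [Finset.mem_filter] at hk
      rw [show g k = some hk.2.choose from dif_pos hk.2]
      exact Finset.mem_image_of_mem _ (Finset.mem_univ _)
    have h3 : ((Finset.univ : Finset (Fin (m - n))).image some).card = m - n := by
      rw [Finset.card_image_of_injective _ (Option.some_injective _)]
      simp
    calc A.card = (A.image g).card := h1
      _ ≤ _ := Finset.card_le_card h2
      _ = m - n := h3
  let B : Finset (Fin m) :=
    Finset.univ.filter (fun k => ¬∃ j, (DMVert.a j : DMVert n m) ∈ (F k).verts)
  have hBcard : n ≤ B.card := by
    have := Finset.card_filter_add_card_filter_not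
      (s := (Finset.univ : Finset (Fin m)))
      (p := fun k => ∃ j, (DMVert.a j : DMVert n m) ∈ (F k).verts)
    have h4 : A.card + B.card = m := by simpa [A, B] using this
    omega
  -- key structural lemmas for a-free trees
  have key_u : ∀ k, (∀ j, (DMVert.a j : DMVert n m) ∉ (F k).verts) →
      (DMVert.u ((T (σ k)).1) : DMVert n m) ∈ (F k).verts := by
    intro k hk
    obtain ⟨p0⟩ := (htree k).isConnected.preconnected ⟨.uhat, huhat k⟩ ⟨.that, hthat k⟩
    obtain ⟨pw, hpw⟩ := p0.toPath
    cases pw with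
    | cons h q =>
      rename_i b
      rw [Subgraph.coe_adj] at h
      rcases adj_uhat T ((F k).adj_sub h) with ⟨ju, hb⟩ | ⟨jj, hb⟩
      · cases q with
        | nil => exact absurd hb (by simp)
        | cons h2 r =>
          rename_i c2
          rw [Subgraph.coe_adj, hb] at h2
          rcases adj_u T ((F k).adj_sub h2) with hc | ⟨l, hc, hTl⟩
          · exfalso
            rw [Walk.cons_isPath_iff] at hpw
            apply hpw.2
            have : c2 = (⟨.uhat, huhat k⟩ : (F k).verts) := Subtype.ext hc
            rw [← this]
            exact List.mem_cons_of_mem _ r.start_mem_support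
          · have hl : l = σ k := t_unique (hc ▸ c2.2)
            rw [← hTl, hl] at hb
            exact hb ▸ b.2
      · exact absurd (hb ▸ b.2) (hk jj)
  have key_v : ∀ k, (∀ j, (DMVert.a j : DMVert n m) ∉ (F k).verts) →
      (DMVert.v ((T (σ k)).2.1) : DMVert n m) ∈ (F k).verts := by
    intro k hk
    obtain ⟨p0⟩ := (htree k).isConnected.preconnected ⟨.vhat, hvhat k⟩ ⟨.that, hthat k⟩
    obtain ⟨pw, hpw⟩ := p0.toPath
    cases pw with
    | cons h q =>
      rename_i b
      rw [Subgraph.coe_adj] at h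
      rcases adj_vhat' ((F k).adj_sub h) with ⟨ju, hb⟩ | ⟨jj, hb⟩
      · cases q with
        | nil => exact absurd hb (by simp)
        | cons h2 r =>
          rename_i c2
          rw [Subgraph.coe_adj, hb] at h2
          rcases adj_v T ((F k).adj_sub h2) with hc | ⟨l, hc, hTl⟩
          · exfalso
            rw [Walk.cons_isPath_iff] at hpw
            apply hpw.2
            have : c2 = (⟨.vhat, hvhat k⟩ : (F k).verts) := Subtype.ext hc
            rw [← this]
            exact List.mem_cons_of_mem _ r.start_mem_support
          · have hl : l = σ k := t_unique (hc ▸ c2.2)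
            rw [← hTl, hl] at hb
            exact hb ▸ b.2
      · exact absurd (hb ▸ b.2) (hk jj)
  have key_w : ∀ k, (∀ j, (DMVert.a j : DMVert n m) ∉ (F k).verts) →
      (DMVert.w ((T (σ k)).2.2) : DMVert n m) ∈ (F k).verts := by
    intro k hk
    obtain ⟨p0⟩ := (htree k).isConnected.preconnected ⟨.what, hwhat k⟩ ⟨.that, hthat k⟩
    obtain ⟨pw, hpw⟩ := p0.toPath
    cases pw with
    | cons h q =>
      rename_i b
      rw [Subgraph.coe_adj] at h
      rcases adj_what' ((F k).adj_sub h) with ⟨ju, hb⟩ | ⟨jj, hb⟩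
      · cases q with
        | nil => exact absurd hb (by simp)
        | cons h2 r =>
          rename_i c2
          rw [Subgraph.coe_adj, hb] at h2
          rcases adj_w T ((F k).adj_sub h2) with hc | ⟨l, hc, hTl⟩
          · exfalso
            rw [Walk.cons_isPath_iff] at hpw
            apply hpw.2
            have : c2 = (⟨.what, hwhat k⟩ : (F k).verts) := Subtype.ext hc
            rw [← this]
            exact List.mem_cons_of_mem _ r.start_mem_support
          · have hl : l = σ k := t_unique (hc ▸ c2.2)
            rw [← hTl, hl] at hb
            exact hb ▸ b.2
      · exact absurd (hb ▸ b.2) (hk jj)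
  -- assemble the matching
  obtain ⟨B', hB'sub, hB'card⟩ := Finset.exists_subset_card_eq hBcard
  have hBnoA : ∀ k ∈ B', ∀ j, (DMVert.a j : DMVert n m) ∉ (F k).verts := by
    intro k hk
    have := hB'sub hk
    rw [Finset.mem_filter] at this
    push_neg at this
    exact this.2
  refine ⟨B'.image σ, ?_, ?_⟩
  · rw [Finset.card_image_of_injOn hinj.injOn, hB'card]
  · intro i hi j hj hij
    rw [Finset.mem_image] at hi hj
    obtain ⟨k, hk, rfl⟩ := hi
    obtain ⟨k', hk', rfl⟩ := hj
    have hkk' : k ≠ k' := fun h => hij (h ▸ rfl)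
    refine ⟨?_, ?_, ?_⟩
    · intro heq
      exact hkk' (loc (unotS _) (key_u k (hBnoA k hk)) (heq ▸ key_u k' (hBnoA k' hk')))
    · intro heq
      exact hkk' (loc (vnotS _) (key_v k (hBnoA k hk)) (heq ▸ key_v k' (hBnoA k' hk')))
    · intro heq
      exact hkk' (loc (wnotS _) (key_w k (hBnoA k hk)) (heq ▸ key_w k' (hBnoA k' hk')))

end Forward

/-- `κ_{G'}(S) ≥ m` iff the 3-DM instance has a perfect matching. -/
theorem dm_reduction_iff (n m : ℕ) (hn : 1 ≤ n) (hmn : n ≤ m)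
    (T : Fin m → Fin n × Fin n × Fin n) :
    (∃ F : Fin m → (dmGraph T).Subgraph, IsIDTrees (dmGraph T) (dmS n m) F) ↔
      (∃ M : Finset (Fin m), M.card = n ∧
        ∀ i ∈ M, ∀ j ∈ M, i ≠ j →
          (T i).1 ≠ (T j).1 ∧ (T i).2.1 ≠ (T j).2.1 ∧ (T i).2.2 ≠ (T j).2.2) := by
  constructor
  · rintro ⟨F, hF⟩
    exact forward_dir hn hmn F hF
  · rintro ⟨M, h1, h2⟩
    exact backward_dir hn hmn M h1 h2
end

section
/- Let n ≥ 1 and m ≥ n be integers, let U = {u_1,…,u_n}, V = {v_1,…,v_n}, W = {w_1,…,w_n} be three pairwise disjoint sets, let T = {T_1,…,T_m} be a collection of m triples in U × V × W, and let G' and S = {û, v̂, ŵ, t̂} be constructed from this instance as follows: V(G') = {û, v̂, ŵ, t̂} ∪ {u_i} ∪ {v_i} ∪ {w_i} ∪ {t_i : 1 ≤ i ≤ m} ∪ {a_j : 1 ≤ j ≤ m−n}, with edges û u_i, v̂ v_i, ŵ w_i (1 ≤ i ≤ n); t̂ t_i (1 ≤ i ≤ m); û a_j, v̂ a_j, ŵ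 a_j (1 ≤ j ≤ m−n); t_i a_j (all i, j); and t_i u_j, t_i v_j, t_i w_j whenever u_j, v_j, w_j respectively belong to T_i. If there is a subset M of T with |M| = n whose triples pairwise differ in every coordinate, then G' contains m internally disjoint trees connecting S; specifically, for every T_i ∈ M the subgraph induced on S ∪ {t_i} and the three vertices of T_i contains a tree connecting S, and for every T_i ∉ M some induced subgraph on {t_i, a_j, û, v̂, ŵ, t̂} contains a tree connecting S, and these m trees form an internally disjoint set of trees connecting S. -/
open SimpleGraph

/- ### Auxiliary general lemmas -/

lemma isAcyclic_anti' {W : Type*} {H G : SimpleGraph W} (h : H ≤ G) (hG : G.IsAcyclic) :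
    H.IsAcyclic := fun _ c hc => hG (c.mapLe h) (hc.mapLe h)

lemma isAcyclic_sup_edge' {W : Type*} {G : SimpleGraph W} {x y : W}
    (hxy : x ≠ y) (hy : ∀ z, ¬ G.Adj y z) (hG : G.IsAcyclic) :
    (G ⊔ edge x y).IsAcyclic := by
  classical
  have key : ∀ {z : W}, (G ⊔ edge x y).Adj y z → z = x := by
    intro z hadj
    rcases hadj with hG' | hE
    · exact absurd hG' (hy z)
    · rw [edge_adj] at hE
      rcases hE.1 with ⟨h1, h2⟩ | ⟨h1, h2⟩
      · exact absurd h1 hxy.symm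
      · exact h2
  intro v c hc
  by_cases he : s(x, y) ∈ c.edges
  · have hyc : y ∈ c.support := Walk.snd_mem_support_of_mem_edges c he
    have hd := hc.rotate hyc
    obtain ⟨z, hadj, q, hq⟩ := Walk.not_nil_iff.mp hd.not_nil
    have hz : z = x := key hadj
    have hqnil : ¬ q.reverse.Nil := Walk.not_nil_of_ne (fun h => hxy (hz ▸ h.symm))
    obtain ⟨w', hadj', r, hr⟩ := Walk.not_nil_iff.mp hqnil
    have hw' : w' = x := key hadj'
    have hmem : s(y, w') ∈ q.edges := by
      have h5 : s(y, w') ∈ q.reverse.edges := by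
        rw [hr, Walk.edges_cons]; exact List.mem_cons_self
      rwa [Walk.edges_reverse, List.mem_reverse] at h5
    have hnodup := hd.isCircuit.isTrail.edges_nodup
    rw [hq, Walk.edges_cons, List.nodup_cons] at hnodup
    refine hnodup.1 ?_
    rwa [hw'.trans hz.symm] at hmem
  · have hsub : ∀ e ∈ c.edges, e ∈ G.edgeSet := by
      intro e hee
      have h2 := Walk.edges_subset_edgeSet c hee
      rw [edgeSet_sup] at h2
      rcases h2 with h2 | h2
      · exact h2
      · exfalso
        rw [edge, edgeSet_fromEdgeSet] at h2
        obtain ⟨h3, _⟩ := h2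
        rw [Set.mem_singleton_iff] at h3
        exact he (h3 ▸ hee)
    exact hG (c.transfer G hsub) (hc.transfer hsub)

lemma disjoint_edgeSet_of_inter {V : Type*} {G : SimpleGraph V} {S : Set V}
    {H1 H2 : G.Subgraph} (hv : H1.verts ∩ H2.verts = S)
    (h1 : ∀ x y, H1.Adj x y → x ∈ S → y ∈ S → False) :
    Disjoint H1.edgeSet H2.edgeSet := by
  rw [Set.disjoint_left]
  intro e
  refine Sym2.ind (fun x y he1 he2 => ?_) e
  rw [SimpleGraph.Subgraph.mem_edgeSet] at he1 he2
  have hx : x ∈ S := hv ▸ Set.mem_inter (H1.edge_vert he1) (H2.edge_vert he2)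
  have hy : y ∈ S := hv ▸ Set.mem_inter (H1.edge_vert he1.symm) (H2.edge_vert he2.symm)
  exact h1 x y he1 hx hy

namespace DMRed

open DMVert

variable {n m : ℕ}

/- ### The two kinds of subgraphs -/

def baseA (T : Fin m → Fin n × Fin n × Fin n) (i : Fin m) (x y : DMVert n m) : Prop :=
  (x = that ∧ y = t i) ∨ (x = t i ∧ y = u (T i).1) ∨ (x = t i ∧ y = v (T i).2.1) ∨
  (x = t i ∧ y = w (T i).2.2) ∨ (x = uhat ∧ y = u (T i).1) ∨ (x = vhat ∧ y = v (T i).2.1) ∨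
  (x = what ∧ y = w (T i).2.2)

def subA (T : Fin m → Fin n × Fin n × Fin n) (i : Fin m) : (dmGraph T).Subgraph where
  verts := {uhat, vhat, what, that, t i, u (T i).1, v (T i).2.1, w (T i).2.2}
  Adj x y := baseA T i x y ∨ baseA T i y x
  adj_sub := by
    have key : ∀ x y, baseA T i x y → (dmGraph T).Adj x y := by
      intro x y h
      rcases h with ⟨rfl,rfl⟩|⟨rfl,rfl⟩|⟨rfl,rfl⟩|⟨rfl,rfl⟩|⟨rfl,rfl⟩|⟨rfl,rfl⟩|⟨rfl,rfl⟩ <;>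
        exact (SimpleGraph.fromRel_adj _ _ _).mpr ⟨by simp, Or.inl (by trivial)⟩
    intro x y hxy
    rcases hxy with h | h
    · exact key _ _ h
    · exact ((key _ _ h).symm)
  edge_vert := by
    intro x y hxy
    rcases hxy with (⟨rfl,-⟩|⟨rfl,-⟩|⟨rfl,-⟩|⟨rfl,-⟩|⟨rfl,-⟩|⟨rfl,-⟩|⟨rfl,-⟩) |
      (⟨-,rfl⟩|⟨-,rfl⟩|⟨-,rfl⟩|⟨-,rfl⟩|⟨-,rfl⟩|⟨-,rfl⟩|⟨-,rfl⟩) <;> simp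
  symm := ⟨fun x y h => h.symm⟩

def baseB (i : Fin m) (j : Fin (m - n)) (x y : DMVert n m) : Prop :=
  (x = that ∧ y = t i) ∨ (x = t i ∧ y = a j) ∨ (x = uhat ∧ y = a j) ∨
  (x = vhat ∧ y = a j) ∨ (x = what ∧ y = a j)

def subB (T : Fin m → Fin n × Fin n × Fin n) (i : Fin m) (j : Fin (m - n)) :
    (dmGraph T).Subgraph where
  verts := {uhat, vhat, what, that, t i, a j}
  Adj x y := baseB i j x y ∨ baseB i j y x
  adj_sub := by
    have key : ∀ x y, baseB (n := n) i j x y → (dmGraph T).Adj x y := by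
      intro x y h
      rcases h with ⟨rfl,rfl⟩|⟨rfl,rfl⟩|⟨rfl,rfl⟩|⟨rfl,rfl⟩|⟨rfl,rfl⟩ <;>
        exact (SimpleGraph.fromRel_adj _ _ _).mpr ⟨by simp, Or.inl (by trivial)⟩
    intro x y hxy
    rcases hxy with h | h
    · exact key _ _ h
    · exact ((key _ _ h).symm)
  edge_vert := by
    intro x y hxy
    rcases hxy with (⟨rfl,-⟩|⟨rfl,-⟩|⟨rfl,-⟩|⟨rfl,-⟩|⟨rfl,-⟩) |
      (⟨-,rfl⟩|⟨-,rfl⟩|⟨-,rfl⟩|⟨-,rfl⟩|⟨-,rfl⟩) <;> simp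
  symm := ⟨fun x y h => h.symm⟩

/- ### Named vertices inside the subgraphs -/

section verts
variable (T : Fin m → Fin n × Fin n × Fin n) (i : Fin m) (j : Fin (m - n))

def aUH : ↥((subA T i).verts) := ⟨uhat, by simp [subA]⟩
def aVH : ↥((subA T i).verts) := ⟨vhat, by simp [subA]⟩
def aWH : ↥((subA T i).verts) := ⟨what, by simp [subA]⟩
def aTH : ↥((subA T i).verts) := ⟨that, by simp [subA]⟩
def aT : ↥((subA T i).verts) := ⟨t i, by simp [subA]⟩
def aU : ↥((subA T i).verts) := ⟨u (T i).1, by simp [subA]⟩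
def aV : ↥((subA T i).verts) := ⟨v (T i).2.1, by simp [subA]⟩
def aW : ↥((subA T i).verts) := ⟨w (T i).2.2, by simp [subA]⟩

def bUH : ↥((subB T i j).verts) := ⟨uhat, by simp [subB]⟩
def bVH : ↥((subB T i j).verts) := ⟨vhat, by simp [subB]⟩
def bWH : ↥((subB T i j).verts) := ⟨what, by simp [subB]⟩
def bTH : ↥((subB T i j).verts) := ⟨that, by simp [subB]⟩
def bT : ↥((subB T i j).verts) := ⟨t i, by simp [subB]⟩
def bA : ↥((subB T i j).verts) := ⟨a j, by simp [subB]⟩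

def chainA : SimpleGraph ↥((subA T i).verts) :=
  ((((((⊥ ⊔ edge (aTH T i) (aT T i)) ⊔ edge (aT T i) (aU T i)) ⊔ edge (aT T i) (aV T i))
    ⊔ edge (aT T i) (aW T i)) ⊔ edge (aU T i) (aUH T i)) ⊔ edge (aV T i) (aVH T i))
    ⊔ edge (aW T i) (aWH T i)

def chainB : SimpleGraph ↥((subB T i j).verts) :=
  ((((⊥ ⊔ edge (bTH T i j) (bT T i j)) ⊔ edge (bT T i j) (bA T i j))
    ⊔ edge (bA T i j) (bUH T i j)) ⊔ edge (bA T i j) (bVH T i j)) ⊔ edge (bA T i j) (bWH T i j)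

end verts

/- ### The subgraphs are trees -/

lemma chainA_isAcyclic (T : Fin m → Fin n × Fin n × Fin n) (i : Fin m) :
    (chainA T i).IsAcyclic := by
  rw [chainA]
  refine isAcyclic_sup_edge' ?_ ?_ (isAcyclic_sup_edge' ?_ ?_ (isAcyclic_sup_edge' ?_ ?_
    (isAcyclic_sup_edge' ?_ ?_ (isAcyclic_sup_edge' ?_ ?_ (isAcyclic_sup_edge' ?_ ?_
    (isAcyclic_sup_edge' ?_ ?_ isAcyclic_bot)))))) <;>
    first
      | (simp [← Subtype.val_inj, aUH, aVH, aWH, aTH, aT, aU, aV, aW]; done)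
      | (intro z; simp [edge_adj, ← Subtype.val_inj, aUH, aVH, aWH, aTH, aT, aU, aV, aW])

lemma chainB_isAcyclic (T : Fin m → Fin n × Fin n × Fin n) (i : Fin m) (j : Fin (m - n)) :
    (chainB T i j).IsAcyclic := by
  rw [chainB]
  refine isAcyclic_sup_edge' ?_ ?_ (isAcyclic_sup_edge' ?_ ?_ (isAcyclic_sup_edge' ?_ ?_
    (isAcyclic_sup_edge' ?_ ?_ (isAcyclic_sup_edge' ?_ ?_ isAcyclic_bot)))) <;>
    first
      | (simp [← Subtype.val_inj, bUH, bVH, bWH, bTH, bT, bA]; done)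
      | (intro z; simp [edge_adj, ← Subtype.val_inj, bUH, bVH, bWH, bTH, bT, bA])

set_option maxHeartbeats 2000000 in
lemma coeA_le (T : Fin m → Fin n × Fin n × Fin n) (i : Fin m) :
    (subA T i).coe ≤ chainA T i := by
  rintro ⟨x, hx⟩ ⟨y, hy⟩ hadj
  rw [SimpleGraph.Subgraph.coe_adj] at hadj
  simp only [subA, baseA] at hadj
  rcases hadj with (⟨rfl,rfl⟩|⟨rfl,rfl⟩|⟨rfl,rfl⟩|⟨rfl,rfl⟩|⟨rfl,rfl⟩|⟨rfl,rfl⟩|⟨rfl,rfl⟩) |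
      (⟨rfl,rfl⟩|⟨rfl,rfl⟩|⟨rfl,rfl⟩|⟨rfl,rfl⟩|⟨rfl,rfl⟩|⟨rfl,rfl⟩|⟨rfl,rfl⟩) <;>
    simp [chainA, edge_adj, aUH, aVH, aWH, aTH, aT, aU, aV, aW]

set_option maxHeartbeats 2000000 in
lemma coeB_le (T : Fin m → Fin n × Fin n × Fin n) (i : Fin m) (j : Fin (m - n)) :
    (subB T i j).coe ≤ chainB T i j := by
  rintro ⟨x, hx⟩ ⟨y, hy⟩ hadj
  rw [SimpleGraph.Subgraph.coe_adj] at hadj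
  simp only [subB, baseB] at hadj
  rcases hadj with (⟨rfl,rfl⟩|⟨rfl,rfl⟩|⟨rfl,rfl⟩|⟨rfl,rfl⟩|⟨rfl,rfl⟩) |
      (⟨rfl,rfl⟩|⟨rfl,rfl⟩|⟨rfl,rfl⟩|⟨rfl,rfl⟩|⟨rfl,rfl⟩) <;>
    simp [chainB, edge_adj, bUH, bVH, bWH, bTH, bT, bA]

lemma isTreeA (T : Fin m → Fin n × Fin n × Fin n) (i : Fin m) :
    ((subA T i).coe).IsTree := by
  constructor
  · rw [connected_iff]
    refine ⟨?_, ⟨aT T i⟩⟩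
    have hub : ∀ (x : DMVert n m) (hx : x ∈ (subA T i).verts),
        (subA T i).coe.Reachable ⟨x, hx⟩ (aT T i) := by
      intro x hx
      have hx' := hx
      simp only [subA, Set.mem_insert_iff, Set.mem_singleton_iff] at hx'
      have e1 : (subA T i).coe.Adj (aTH T i) (aT T i) := by
        simp [Subgraph.coe_adj, subA, baseA, aTH, aT]
      have e2 : (subA T i).coe.Adj (aU T i) (aT T i) := by
        simp [Subgraph.coe_adj, subA, baseA, aU, aT]
      have e3 : (subA T i).coe.Adj (aV T i) (aT T i) := by
        simp [Subgraph.coe_adj, subA, baseA, aV, aT]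
      have e4 : (subA T i).coe.Adj (aW T i) (aT T i) := by
        simp [Subgraph.coe_adj, subA, baseA, aW, aT]
      have e5 : (subA T i).coe.Adj (aUH T i) (aU T i) := by
        simp [Subgraph.coe_adj, subA, baseA, aUH, aU]
      have e6 : (subA T i).coe.Adj (aVH T i) (aV T i) := by
        simp [Subgraph.coe_adj, subA, baseA, aVH, aV]
      have e7 : (subA T i).coe.Adj (aWH T i) (aW T i) := by
        simp [Subgraph.coe_adj, subA, baseA, aWH, aW]
      rcases hx' with rfl|rfl|rfl|rfl|rfl|rfl|rfl|rfl
      · exact (e5.reachable).trans e2.reachable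
      · exact (e6.reachable).trans e3.reachable
      · exact (e7.reachable).trans e4.reachable
      · exact e1.reachable
      · exact Reachable.refl _
      · exact e2.reachable
      · exact e3.reachable
      · exact e4.reachable
    rintro ⟨x, hx⟩ ⟨y, hy⟩
    exact (hub x hx).trans (hub y hy).symm
  · exact isAcyclic_anti' (coeA_le T i) (chainA_isAcyclic T i)

lemma isTreeB (T : Fin m → Fin n × Fin n × Fin n) (i : Fin m) (j : Fin (m - n)) :
    ((subB T i j).coe).IsTree := by
  constructor
  · rw [connected_iff]
    refine ⟨?_, ⟨bA T i j⟩⟩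
    have hub : ∀ (x : DMVert n m) (hx : x ∈ (subB T i j).verts),
        (subB T i j).coe.Reachable ⟨x, hx⟩ (bA T i j) := by
      intro x hx
      have hx' := hx
      simp only [subB, Set.mem_insert_iff, Set.mem_singleton_iff] at hx'
      have e1 : (subB T i j).coe.Adj (bTH T i j) (bT T i j) := by
        simp [Subgraph.coe_adj, subB, baseB, bTH, bT]
      have e2 : (subB T i j).coe.Adj (bT T i j) (bA T i j) := by
        simp [Subgraph.coe_adj, subB, baseB, bT, bA]
      have e3 : (subB T i j).coe.Adj (bUH T i j) (bA T i j) := by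
        simp [Subgraph.coe_adj, subB, baseB, bUH, bA]
      have e4 : (subB T i j).coe.Adj (bVH T i j) (bA T i j) := by
        simp [Subgraph.coe_adj, subB, baseB, bVH, bA]
      have e5 : (subB T i j).coe.Adj (bWH T i j) (bA T i j) := by
        simp [Subgraph.coe_adj, subB, baseB, bWH, bA]
      rcases hx' with rfl|rfl|rfl|rfl|rfl|rfl
      · exact e3.reachable
      · exact e4.reachable
      · exact e5.reachable
      · exact (e1.reachable).trans e2.reachable
      · exact e2.reachable
      · exact Reachable.refl _
    rintro ⟨x, hx⟩ ⟨y, hy⟩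
    exact (hub x hx).trans (hub y hy).symm
  · exact isAcyclic_anti' (coeB_le T i j) (chainB_isAcyclic T i j)

/- ### Vertex sets: subsets and intersections -/

lemma dmS_subset_A (T : Fin m → Fin n × Fin n × Fin n) (i : Fin m) :
    dmS n m ⊆ (subA T i).verts := by
  intro x hx
  rcases hx with rfl|rfl|rfl|rfl <;> simp [subA]

lemma dmS_subset_B (T : Fin m → Fin n × Fin n × Fin n) (i : Fin m) (j : Fin (m - n)) :
    dmS n m ⊆ (subB T i j).verts := by
  intro x hx
  rcases hx with rfl|rfl|rfl|rfl <;> simp [subB]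

lemma vertsA_subset (T : Fin m → Fin n × Fin n × Fin n) (i : Fin m) :
    (subA T i).verts ⊆ dmS n m ∪
      {DMVert.t i, DMVert.u (T i).1, DMVert.v (T i).2.1, DMVert.w (T i).2.2} := by
  intro x hx
  simp only [subA, Set.mem_insert_iff, Set.mem_singleton_iff] at hx
  rcases hx with rfl|rfl|rfl|rfl|rfl|rfl|rfl|rfl <;> simp [dmS]

lemma vertsB_subset (T : Fin m → Fin n × Fin n × Fin n) (i : Fin m) (j : Fin (m - n)) :
    (subB T i j).verts ⊆ dmS n m ∪ {DMVert.t i, DMVert.a j} := by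
  intro x hx
  simp only [subB, Set.mem_insert_iff, Set.mem_singleton_iff] at hx
  rcases hx with rfl|rfl|rfl|rfl|rfl|rfl <;> simp [dmS]

lemma interAA (T : Fin m → Fin n × Fin n × Fin n) {i j : Fin m} (hij : i ≠ j)
    (h1 : (T i).1 ≠ (T j).1) (h2 : (T i).2.1 ≠ (T j).2.1) (h3 : (T i).2.2 ≠ (T j).2.2) :
    (subA T i).verts ∩ (subA T j).verts = dmS n m := by
  ext x
  simp only [subA, dmS, Set.mem_inter_iff, Set.mem_insert_iff, Set.mem_singleton_iff]
  constructor
  · rintro ⟨rfl|rfl|rfl|rfl|rfl|rfl|rfl|rfl, h⟩ <;> simp_all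
  · rintro (rfl|rfl|rfl|rfl) <;> simp

lemma interAB (T : Fin m → Fin n × Fin n × Fin n) {i i' : Fin m} (hii' : i ≠ i')
    (j : Fin (m - n)) : (subA T i).verts ∩ (subB T i' j).verts = dmS n m := by
  ext x
  simp only [subA, subB, dmS, Set.mem_inter_iff, Set.mem_insert_iff, Set.mem_singleton_iff]
  constructor
  · rintro ⟨rfl|rfl|rfl|rfl|rfl|rfl|rfl|rfl, h⟩ <;> simp_all
  · rintro (rfl|rfl|rfl|rfl) <;> simp

lemma interBB (T : Fin m → Fin n × Fin n × Fin n) {i i' : Fin m} (hii' : i ≠ i')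
    {j j' : Fin (m - n)} (hjj' : j ≠ j') :
    (subB T i j).verts ∩ (subB T i' j').verts = dmS n m := by
  ext x
  simp only [subB, dmS, Set.mem_inter_iff, Set.mem_insert_iff, Set.mem_singleton_iff]
  constructor
  · rintro ⟨rfl|rfl|rfl|rfl|rfl|rfl, h⟩ <;> simp_all
  · rintro (rfl|rfl|rfl|rfl) <;> simp

lemma noedgeA (T : Fin m → Fin n × Fin n × Fin n) (i : Fin m) :
    ∀ x y, (subA T i).Adj x y → x ∈ dmS n m → y ∈ dmS n m → False := by
  intro x y hxy hx hy
  simp only [dmS, Set.mem_insert_iff, Set.mem_singleton_iff] at hx hy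
  simp only [subA, baseA] at hxy
  rcases hxy with (⟨rfl,rfl⟩|⟨rfl,rfl⟩|⟨rfl,rfl⟩|⟨rfl,rfl⟩|⟨rfl,rfl⟩|⟨rfl,rfl⟩|⟨rfl,rfl⟩) |
      (⟨rfl,rfl⟩|⟨rfl,rfl⟩|⟨rfl,rfl⟩|⟨rfl,rfl⟩|⟨rfl,rfl⟩|⟨rfl,rfl⟩|⟨rfl,rfl⟩) <;> simp_all

lemma noedgeB (T : Fin m → Fin n × Fin n × Fin n) (i : Fin m) (j : Fin (m - n)) :
    ∀ x y, (subB T i j).Adj x y → x ∈ dmS n m → y ∈ dmS n m → False := by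
  intro x y hxy hx hy
  simp only [dmS, Set.mem_insert_iff, Set.mem_singleton_iff] at hx hy
  simp only [subB, baseB] at hxy
  rcases hxy with (⟨rfl,rfl⟩|⟨rfl,rfl⟩|⟨rfl,rfl⟩|⟨rfl,rfl⟩|⟨rfl,rfl⟩) |
      (⟨rfl,rfl⟩|⟨rfl,rfl⟩|⟨rfl,rfl⟩|⟨rfl,rfl⟩|⟨rfl,rfl⟩) <;> simp_all

end DMRed

open DMRed in
/-- If the 3-DM instance has a perfect matching `M`, then `G'` contains `m` internally
disjoint trees connecting `S`; moreover for `i ∈ M` the `i`-th tree lives inside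
`S ∪ {t_i}` together with the three vertices of the triple `T i`, and for `i ∉ M`
the `i`-th tree lives inside `S ∪ {t_i, a_j}` for some `j`. -/
theorem dm_reduction_of_matching (n m : ℕ) (hn : 1 ≤ n) (hmn : n ≤ m)
    (T : Fin m → Fin n × Fin n × Fin n)
    (M : Finset (Fin m)) (hMcard : M.card = n)
    (hM : ∀ i ∈ M, ∀ j ∈ M, i ≠ j →
      (T i).1 ≠ (T j).1 ∧ (T i).2.1 ≠ (T j).2.1 ∧ (T i).2.2 ≠ (T j).2.2) :
    ∃ F : Fin m → (dmGraph T).Subgraph, IsIDTrees (dmGraph T) (dmS n m) F ∧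
      (∀ i ∈ M, (F i).verts ⊆ dmS n m ∪
        {DMVert.t i, DMVert.u (T i).1, DMVert.v (T i).2.1, DMVert.w (T i).2.2}) ∧
      (∀ i ∉ M, ∃ j : Fin (m - n), (F i).verts ⊆ dmS n m ∪ {DMVert.t i, DMVert.a j}) := by
  classical
  have hcc : Mᶜ.card = m - n := by
    rw [Finset.card_compl, hMcard, Fintype.card_fin]
  let e : ↥(Mᶜ) ≃ Fin (m - n) := Finset.equivFinOfCardEq hcc
  refine ⟨fun i => if h : i ∈ M then subA T i
      else subB T i (e ⟨i, Finset.mem_compl.mpr h⟩), ⟨?_, ?_⟩, ?_, ?_⟩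
  · intro i
    by_cases h : i ∈ M
    · dsimp only
      rw [dif_pos h]
      exact ⟨dmS_subset_A T i, isTreeA T i⟩
    · dsimp only
      rw [dif_neg h]
      exact ⟨dmS_subset_B T i _, isTreeB T i _⟩
  · intro i j hij
    by_cases hi : i ∈ M <;> by_cases hj : j ∈ M
    · dsimp only
      rw [dif_pos hi, dif_pos hj]
      obtain ⟨h1, h2, h3⟩ := hM i hi j hj hij
      have hv := interAA T hij h1 h2 h3
      exact ⟨hv, disjoint_edgeSet_of_inter hv (noedgeA T i)⟩
    · dsimp only
      rw [dif_pos hi, dif_neg hj]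
      have hv := interAB T hij (e ⟨j, Finset.mem_compl.mpr hj⟩)
      exact ⟨hv, disjoint_edgeSet_of_inter hv (noedgeA T i)⟩
    · dsimp only
      rw [dif_neg hi, dif_pos hj]
      have hv : (subB T i (e ⟨i, Finset.mem_compl.mpr hi⟩)).verts ∩ (subA T j).verts
          = dmS n m := by
        rw [Set.inter_comm]
        exact interAB T hij.symm _
      exact ⟨hv, disjoint_edgeSet_of_inter hv (noedgeB T i _)⟩
    · dsimp only
      rw [dif_neg hi, dif_neg hj]
      have hjj' : e ⟨i, Finset.mem_compl.mpr hi⟩ ≠ e ⟨j, Finset.mem_compl.mpr hj⟩ := by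
        intro h
        exact hij (Subtype.ext_iff.mp (e.injective h))
      have hv := interBB T hij hjj'
      exact ⟨hv, disjoint_edgeSet_of_inter hv (noedgeB T i _)⟩
  · intro i hi
    dsimp only
    rw [dif_pos hi]
    exact vertsA_subset T i
  · intro i hi
    dsimp only
    rw [dif_neg hi]
    exact ⟨e ⟨i, Finset.mem_compl.mpr hi⟩, vertsB_subset T i _⟩
end

section
/- Let n ≥ 1 and m ≥ n be integers, let U = {u_1,…,u_n}, V = {v_1,…,v_n}, W = {w_1,…,w_n} be three pairwise disjoint sets, let T = {T_1,…,T_m} be a collection of m triples in U × V × W, and let G' and S = {û, v̂, ŵ, t̂} be constructed from this instance as follows: V(G') = {û, v̂, ŵ, t̂} ∪ {u_i} ∪ {v_i} ∪ {w_i} ∪ {t_i : 1 ≤ i ≤ m} ∪ {a_j : 1 ≤ j ≤ m−n}, with edges û u_i, v̂ v_i, ŵ w_i (1 ≤ i ≤ n); t̂ t_i (1 ≤ i ≤ m); û a_j, v̂ a_j, ŵ a_j (1 ≤ j ≤ m−n); t_i a_j (all i, j); and t_i u_j, t_i v_j, t_i w_j whenever u_j, v_j, w_j respectively belong to T_i.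 If G' contains m internally disjoint trees connecting S, then there is a subset M of T with |M| = n such that whenever (u,v,w) and (u',v',w') are distinct triples in M, u ≠ u', v ≠ v' and w ≠ w'. -/
open SimpleGraph

section Aux
variable {n m : ℕ} {T : Fin m → Fin n × Fin n × Fin n}

lemma dm_adj_uhat (x : DMVert n m) :
    (dmGraph T).Adj .uhat x ↔ (∃ i, x = .u i) ∨ (∃ j, x = .a j) := by
  cases x <;> simp [dmGraph, dmRel]

lemma dm_adj_vhat (x : DMVert n m) :
    (dmGraph T).Adj .vhat x ↔ (∃ i, x = .v i) ∨ (∃ j, x = .a j) := by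
  cases x <;> simp [dmGraph, dmRel]

lemma dm_adj_what (x : DMVert n m) :
    (dmGraph T).Adj .what x ↔ (∃ i, x = .w i) ∨ (∃ j, x = .a j) := by
  cases x <;> simp [dmGraph, dmRel]

lemma dm_adj_that (x : DMVert n m) :
    (dmGraph T).Adj .that x ↔ ∃ l, x = .t l := by
  cases x <;> simp [dmGraph, dmRel]

lemma dm_adj_u (i : Fin n) (x : DMVert n m) :
    (dmGraph T).Adj (.u i) x ↔ (x = .uhat ∨ ∃ l, x = .t l ∧ (T l).1 = i) := by
  cases x <;> simp [dmGraph, dmRel, eq_comm]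

lemma dm_adj_v (i : Fin n) (x : DMVert n m) :
    (dmGraph T).Adj (.v i) x ↔ (x = .vhat ∨ ∃ l, x = .t l ∧ (T l).2.1 = i) := by
  cases x <;> simp [dmGraph, dmRel, eq_comm]

lemma dm_adj_w (i : Fin n) (x : DMVert n m) :
    (dmGraph T).Adj (.w i) x ↔ (x = .what ∨ ∃ l, x = .t l ∧ (T l).2.2 = i) := by
  cases x <;> simp [dmGraph, dmRel, eq_comm]

lemma u_not_mem_dmS (i : Fin n) : (DMVert.u i : DMVert n m) ∉ dmS n m := by
  simp [dmS]
lemma v_not_mem_dmS (i : Fin n) : (DMVert.v i : DMVert n m) ∉ dmS n m := by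
  simp [dmS]
lemma w_not_mem_dmS (i : Fin n) : (DMVert.w i : DMVert n m) ∉ dmS n m := by
  simp [dmS]
lemma t_not_mem_dmS (l : Fin m) : (DMVert.t l : DMVert n m) ∉ dmS n m := by
  simp [dmS]
lemma a_not_mem_dmS (j : Fin (m - n)) : (DMVert.a j : DMVert n m) ∉ dmS n m := by
  simp [dmS]

lemma uhat_mem_dmS : (DMVert.uhat : DMVert n m) ∈ dmS n m := by simp [dmS]
lemma vhat_mem_dmS : (DMVert.vhat : DMVert n m) ∈ dmS n m := by simp [dmS]
lemma what_mem_dmS : (DMVert.what : DMVert n m) ∈ dmS n m := by simp [dmS]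
lemma that_mem_dmS : (DMVert.that : DMVert n m) ∈ dmS n m := by simp [dmS]

end Aux

lemma two_step {V : Type*} {G : SimpleGraph V} (H : G.Subgraph) (hc : H.coe.Connected)
    {a b : V} (ha : a ∈ H.verts) (hb : b ∈ H.verts) (hab : a ≠ b) :
    ∃ x, H.Adj a x ∧ (x = b ∨ ∃ y, y ≠ a ∧ H.Adj x y) := by
  classical
  obtain ⟨w⟩ := hc.preconnected ⟨a, ha⟩ ⟨b, hb⟩
  obtain ⟨p, hp⟩ := w.toPath
  clear w
  match p, hp with
  | Walk.nil, _ => exact absurd rfl hab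
  | Walk.cons (v := x') h1 Walk.nil, hp =>
    exact ⟨x'.1, by simpa using h1, Or.inl rfl⟩
  | Walk.cons (v := x') h1 (Walk.cons (v := y') h2 p''), hp =>
    refine ⟨x'.1, by simpa using h1, Or.inr ⟨y'.1, ?_, by simpa using h2⟩⟩
    have hnd := (Walk.cons_isPath_iff _ _).1 hp
    intro hya
    apply hnd.2
    have hy : y' = ⟨a, ha⟩ := Subtype.ext hya
    rw [← hy]
    simp [Walk.support_cons]

/-- If `G'` contains `m` internally disjoint trees connecting `S = {û, v̂, ŵ, t̂}`, then the
3-DM instance has a subset `M` of `n` triples that pairwise differ in every coordinate. -/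
theorem dm_matching_of_trees (n m : ℕ) (hn : 1 ≤ n) (hmn : n ≤ m)
    (T : Fin m → Fin n × Fin n × Fin n)
    (F : Fin m → (dmGraph T).Subgraph)
    (hF : IsIDTrees (dmGraph T) (dmS n m) F) :
    ∃ M : Finset (Fin m), M.card = n ∧
      ∀ i ∈ M, ∀ j ∈ M, i ≠ j →
        (T i).1 ≠ (T j).1 ∧ (T i).2.1 ≠ (T j).2.1 ∧ (T i).2.2 ≠ (T j).2.2 := by
  classical
  obtain ⟨h1, h2⟩ := hF
  have hconn : ∀ k, ((F k).coe).Connected := fun k => (h1 k).2.isConnected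
  have hS : ∀ k, dmS n m ⊆ (F k).verts := fun k => (h1 k).1
  -- a vertex in two distinct trees lies in S
  have hdisj : ∀ i j, i ≠ j → ∀ x, x ∈ (F i).verts → x ∈ (F j).verts → x ∈ dmS n m := by
    intro i j hij x hxi hxj
    rw [← (h2 i j hij).1]; exact ⟨hxi, hxj⟩
  -- choose the t-neighbor of t̂ in each tree
  have hex_t : ∀ k, ∃ l, (F k).Adj .that (.t l) := by
    intro k
    obtain ⟨x, hx, -⟩ := two_step (F k) (hconn k) (hS k that_mem_dmS) (hS k uhat_mem_dmS)
      (fun h => by cases h)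
    obtain ⟨l, rfl⟩ := (dm_adj_that x).1 ((F k).adj_sub hx)
    exact ⟨l, hx⟩
  choose σ hσ using hex_t
  have hσinj : Function.Injective σ := by
    intro i j hij
    by_contra hne
    have h1i : (DMVert.t (σ i) : DMVert n m) ∈ (F i).verts := (hσ i).snd_mem
    have h1j : (DMVert.t (σ i) : DMVert n m) ∈ (F j).verts := hij ▸ (hσ j).snd_mem
    exact t_not_mem_dmS _ (hdisj i j hne _ h1i h1j)
  have hσbij : Function.Bijective σ := (Finite.injective_iff_bijective).1 hσinj
  -- uniqueness of the t-vertex in each tree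
  have huniq_t : ∀ k l, (DMVert.t l : DMVert n m) ∈ (F k).verts → l = σ k := by
    intro k l hl
    obtain ⟨k', hk'⟩ := hσbij.2 l
    subst hk'
    rcases eq_or_ne k' k with rfl | hne
    · rfl
    · exact absurd (hdisj k' k hne _ (hσ k').snd_mem hl) (t_not_mem_dmS _)
  -- the embeddings of Fin n ⊕ Fin (m-n) into neighbors of û, v̂, ŵ
  set ψu : Fin n ⊕ Fin (m - n) → DMVert n m := Sum.elim DMVert.u DMVert.a with hψu
  set ψv : Fin n ⊕ Fin (m - n) → DMVert n m := Sum.elim DMVert.v DMVert.a with hψv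
  set ψw : Fin n ⊕ Fin (m - n) → DMVert n m := Sum.elim DMVert.w DMVert.a with hψw
  have hψu_notS : ∀ s, ψu s ∉ dmS n m := by
    rintro (i | j) <;> simp [hψu, dmS]
  have hψv_notS : ∀ s, ψv s ∉ dmS n m := by
    rintro (i | j) <;> simp [hψv, dmS]
  have hψw_notS : ∀ s, ψw s ∉ dmS n m := by
    rintro (i | j) <;> simp [hψw, dmS]
  have hψu_inj : Function.Injective ψu := by
    rintro (i | j) (i' | j') h <;> simp [hψu] at h <;> simp [h]
  have hψv_inj : Function.Injective ψv := by
    rintro (i | j) (i' | j') h <;> simp [hψv] at h <;> simp [h]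
  have hψw_inj : Function.Injective ψw := by
    rintro (i | j) (i' | j') h <;> simp [hψw] at h <;> simp [h]
  have hcard : Fintype.card (Fin m) = Fintype.card (Fin n ⊕ Fin (m - n)) := by
    simp; omega
  -- choose the û-neighbor in each tree
  have hex_u : ∀ k, ∃ s, (F k).Adj .uhat (ψu s) := by
    intro k
    obtain ⟨x, hx, -⟩ := two_step (F k) (hconn k) (hS k uhat_mem_dmS) (hS k that_mem_dmS)
      (fun h => by cases h)
    rcases (dm_adj_uhat x).1 ((F k).adj_sub hx) with ⟨i, rfl⟩ | ⟨j, rfl⟩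
    · exact ⟨.inl i, hx⟩
    · exact ⟨.inr j, hx⟩
  choose ρu hρu using hex_u
  have hex_v : ∀ k, ∃ s, (F k).Adj .vhat (ψv s) := by
    intro k
    obtain ⟨x, hx, -⟩ := two_step (F k) (hconn k) (hS k vhat_mem_dmS) (hS k that_mem_dmS)
      (fun h => by cases h)
    rcases (dm_adj_vhat x).1 ((F k).adj_sub hx) with ⟨i, rfl⟩ | ⟨j, rfl⟩
    · exact ⟨.inl i, hx⟩
    · exact ⟨.inr j, hx⟩
  choose ρv hρv using hex_v
  have hex_w : ∀ k, ∃ s, (F k).Adj .what (ψw s) := by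
    intro k
    obtain ⟨x, hx, -⟩ := two_step (F k) (hconn k) (hS k what_mem_dmS) (hS k that_mem_dmS)
      (fun h => by cases h)
    rcases (dm_adj_what x).1 ((F k).adj_sub hx) with ⟨i, rfl⟩ | ⟨j, rfl⟩
    · exact ⟨.inl i, hx⟩
    · exact ⟨.inr j, hx⟩
  choose ρw hρw using hex_w
  -- injectivity and bijectivity of ρ's
  have hρinj : ∀ (ψ : Fin n ⊕ Fin (m - n) → DMVert n m)
      (ρ : Fin m → Fin n ⊕ Fin (m - n)),
      Function.Injective ψ → (∀ s, ψ s ∉ dmS n m) →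
      (∀ k, ψ (ρ k) ∈ (F k).verts) → Function.Bijective ρ := by
    intro ψ ρ hinj hnotS hmem
    refine (Fintype.bijective_iff_injective_and_card ρ).2 ⟨?_, hcard⟩
    intro i j hij
    by_contra hne
    exact hnotS _ (hdisj i j hne _ (hmem i) (hij ▸ hmem j))
  have hρubij := hρinj ψu ρu hψu_inj hψu_notS (fun k => (hρu k).snd_mem)
  have hρvbij := hρinj ψv ρv hψv_inj hψv_notS (fun k => (hρv k).snd_mem)
  have hρwbij := hρinj ψw ρw hψw_inj hψw_notS (fun k => (hρw k).snd_mem)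
  -- uniqueness: any û-neighbor lying in tree k equals ψu (ρu k)
  have huniq : ∀ (ψ : Fin n ⊕ Fin (m - n) → DMVert n m)
      (ρ : Fin m → Fin n ⊕ Fin (m - n)), (∀ s, ψ s ∉ dmS n m) →
      Function.Bijective ρ → (∀ k, ψ (ρ k) ∈ (F k).verts) →
      ∀ k s, ψ s ∈ (F k).verts → s = ρ k := by
    intro ψ ρ hnotS hbij hmem k s hs
    obtain ⟨k', rfl⟩ := hbij.2 s
    rcases eq_or_ne k' k with rfl | hne
    · rfl
    · exact absurd (hdisj k' k hne _ (hmem k') hs) (hnotS _)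
  -- if ρu k is an a-vertex then so are ρv k and ρw k (shared a-vertex)
  have h_av : ∀ k j, ρv k = .inr j → ρu k = .inr j := by
    intro k j h
    have hv : (DMVert.a j : DMVert n m) ∈ (F k).verts := by
      have := (hρv k).snd_mem; rwa [h] at this
    have := huniq ψu ρu hψu_notS hρubij (fun k => (hρu k).snd_mem) k (.inr j) hv
    exact this.symm
  have h_aw : ∀ k j, ρw k = .inr j → ρu k = .inr j := by
    intro k j h
    have hw : (DMVert.a j : DMVert n m) ∈ (F k).verts := by
      have := (hρw k).snd_mem; rwa [h] at this
    have := huniq ψu ρu hψu_notS hρubij (fun k => (hρu k).snd_mem) k (.inr j) hw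
    exact this.symm
  -- main coordinate lemmas
  have hcoord1 : ∀ k i, ρu k = .inl i → (T (σ k)).1 = i := by
    intro k i hk
    obtain ⟨x, hx, hcase⟩ := two_step (F k) (hconn k) (hS k uhat_mem_dmS) (hS k that_mem_dmS)
      (fun h => by cases h)
    have hxs : ∃ s, x = ψu s := by
      rcases (dm_adj_uhat x).1 ((F k).adj_sub hx) with ⟨i', rfl⟩ | ⟨j', rfl⟩
      · exact ⟨.inl i', rfl⟩
      · exact ⟨.inr j', rfl⟩
    obtain ⟨s, rfl⟩ := hxs
    have hs : s = ρu k := huniq ψu ρu hψu_notS hρubij (fun k => (hρu k).snd_mem) k s hx.snd_mem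
    rw [hs, hk] at hx hcase
    rcases hcase with habs | ⟨y, hyne, hyx⟩
    · exact absurd habs (by simp [hψu])
    · have hyG := (F k).adj_sub hyx
      simp only [hψu, Sum.elim_inl] at hyG
      rcases (dm_adj_u i y).1 hyG with rfl | ⟨l, rfl, hl⟩
      · exact absurd rfl hyne
      · rwa [huniq_t k l hyx.snd_mem] at hl
  have hcoord2 : ∀ k i, ρv k = .inl i → (T (σ k)).2.1 = i := by
    intro k i hk
    obtain ⟨x, hx, hcase⟩ := two_step (F k) (hconn k) (hS k vhat_mem_dmS) (hS k that_mem_dmS)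
      (fun h => by cases h)
    have hxs : ∃ s, x = ψv s := by
      rcases (dm_adj_vhat x).1 ((F k).adj_sub hx) with ⟨i', rfl⟩ | ⟨j', rfl⟩
      · exact ⟨.inl i', rfl⟩
      · exact ⟨.inr j', rfl⟩
    obtain ⟨s, rfl⟩ := hxs
    have hs : s = ρv k := huniq ψv ρv hψv_notS hρvbij (fun k => (hρv k).snd_mem) k s hx.snd_mem
    rw [hs, hk] at hx hcase
    rcases hcase with habs | ⟨y, hyne, hyx⟩
    · exact absurd habs (by simp [hψv])
    · have hyG := (F k).adj_sub hyx
      simp only [hψv, Sum.elim_inl] at hyG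
      rcases (dm_adj_v i y).1 hyG with rfl | ⟨l, rfl, hl⟩
      · exact absurd rfl hyne
      · rwa [huniq_t k l hyx.snd_mem] at hl
  have hcoord3 : ∀ k i, ρw k = .inl i → (T (σ k)).2.2 = i := by
    intro k i hk
    obtain ⟨x, hx, hcase⟩ := two_step (F k) (hconn k) (hS k what_mem_dmS) (hS k that_mem_dmS)
      (fun h => by cases h)
    have hxs : ∃ s, x = ψw s := by
      rcases (dm_adj_what x).1 ((F k).adj_sub hx) with ⟨i', rfl⟩ | ⟨j', rfl⟩
      · exact ⟨.inl i', rfl⟩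
      · exact ⟨.inr j', rfl⟩
    obtain ⟨s, rfl⟩ := hxs
    have hs : s = ρw k := huniq ψw ρw hψw_notS hρwbij (fun k => (hρw k).snd_mem) k s hx.snd_mem
    rw [hs, hk] at hx hcase
    rcases hcase with habs | ⟨y, hyne, hyx⟩
    · exact absurd habs (by simp [hψw])
    · have hyG := (F k).adj_sub hyx
      simp only [hψw, Sum.elim_inl] at hyG
      rcases (dm_adj_w i y).1 hyG with rfl | ⟨l, rfl, hl⟩
      · exact absurd rfl hyne
      · rwa [huniq_t k l hyx.snd_mem] at hl
  -- assemble the matching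
  let e : Fin m ≃ (Fin n ⊕ Fin (m - n)) := Equiv.ofBijective ρu hρubij
  refine ⟨Finset.image (fun i : Fin n => σ (e.symm (.inl i))) Finset.univ, ?_, ?_⟩
  · rw [Finset.card_image_of_injective _ (fun i j hij => by
      have := hσinj hij
      have := e.symm.injective this
      exact Sum.inl.inj this), Finset.card_univ, Fintype.card_fin]
  · rintro i' hi' j' hj' hne'
    simp only [Finset.mem_image, Finset.mem_univ, true_and] at hi' hj'
    obtain ⟨i, rfl⟩ := hi'
    obtain ⟨j, rfl⟩ := hj'
    have hρk1 : ρu (e.symm (.inl i)) = .inl i := e.apply_symm_apply (.inl i)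
    have hρk2 : ρu (e.symm (.inl j)) = .inl j := e.apply_symm_apply (.inl j)
    have hk12 : e.symm (Sum.inl i) ≠ e.symm (Sum.inl j) := fun h => hne' (congrArg σ h)
    have hij : i ≠ j := fun h => hk12 (by rw [h])
    refine ⟨?_, ?_, ?_⟩
    · rw [hcoord1 _ i hρk1, hcoord1 _ j hρk2]; exact hij
    · obtain ⟨g1, hg1⟩ : ∃ g, ρv (e.symm (.inl i)) = .inl g := by
        rcases h : ρv (e.symm (.inl i)) with g | jj
        · exact ⟨g, rfl⟩
        · rw [h_av _ jj h] at hρk1; cases hρk1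
      obtain ⟨g2, hg2⟩ : ∃ g, ρv (e.symm (.inl j)) = .inl g := by
        rcases h : ρv (e.symm (.inl j)) with g | jj
        · exact ⟨g, rfl⟩
        · rw [h_av _ jj h] at hρk2; cases hρk2
      rw [hcoord2 _ g1 hg1, hcoord2 _ g2 hg2]
      intro h
      exact hk12 (hρvbij.1 (by rw [hg1, hg2, h]))
    · obtain ⟨g1, hg1⟩ : ∃ g, ρw (e.symm (.inl i)) = .inl g := by
        rcases h : ρw (e.symm (.inl i)) with g | jj
        · exact ⟨g, rfl⟩
        · rw [h_aw _ jj h] at hρk1; cases hρk1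
      obtain ⟨g2, hg2⟩ : ∃ g, ρw (e.symm (.inl j)) = .inl g := by
        rcases h : ρw (e.symm (.inl j)) with g | jj
        · exact ⟨g, rfl⟩
        · rw [h_aw _ jj h] at hρk2; cases hρk2
      rw [hcoord3 _ g1 hg1, hcoord3 _ g2 hg2]
      intro h
      exact hk12 (hρwbij.1 (by rw [hg1, hg2, h]))
end

section
/- Let G be a graph, let S = {v_1, v_2, v_3, v_4} be a 4-subset of V(G), and let k_1 ≥ 5 and k_2 ≥ 2 be integers. Construct G' from G by adding k_1 − 4 new vertices â^1, …, â^{k_1−4} and, for each 1 ≤ i ≤ k_1 − 4, adding k_2 internally disjoint paths â^i a^i_j v_1 (1 ≤ j ≤ k_2) of length two, where all vertices a^i_j are new and pairwise distinct. Let S' = {v_1, v_2, v_3, v_4, â^1, …, â^{k_1−4}}, a k_1-subset of V(G'). Then κ_{G'}(S') ≥ k_2 if and only if κ_G(S) ≥ k_2. -/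
open SimpleGraph

/-- Vertices of the graph `G'` obtained from a graph on `V` by adding `p` new vertices
`â^1, …, â^p` (`ahat i`) and, for each of them, `q` new middle vertices `a^i_j` (`mid i j`). -/
inductive ExtVert (V : Type*) (p q : ℕ) where
  | base (v : V)
  | ahat (i : Fin p)
  | mid (i : Fin p) (j : Fin q)

/-- Base adjacency of `G'`: the edges of `G`, together with the paths
`â^i — a^i_j — v₁` of length two. -/
def extRel {V : Type*} (G : SimpleGraph V) (v1 : V) {p q : ℕ} :
    ExtVert V p q → ExtVert V p q → Prop
  | .base v, .base w => G.Adj v w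
  | .ahat i, .mid i' _ => i = i'
  | .mid _ _, .base v => v = v1
  | _, _ => False

/-- The graph `G'` obtained from `G` by adding, for each new vertex `â^i`, `q` internally
disjoint paths `â^i a^i_j v₁` of length two through new pairwise distinct vertices. -/
def extGraph {V : Type*} (G : SimpleGraph V) (v1 : V) (p q : ℕ) :
    SimpleGraph (ExtVert V p q) :=
  SimpleGraph.fromRel (extRel G v1)

/-- The set `S' = {v₁, v₂, v₃, v₄, â^1, …, â^p}` inside `G'`. -/
def extS {V : Type*} (v1 v2 v3 v4 : V) (p q : ℕ) : Set (ExtVert V p q) :=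
  (ExtVert.base '' {v1, v2, v3, v4}) ∪ Set.range ExtVert.ahat



namespace ExtAux
open SimpleGraph Walk

variable {X Y : Type*}

lemma cycle_two_edges {G : SimpleGraph X} [DecidableEq X] {u x : X} {c : G.Walk u u} (hc : c.IsCycle)
    (hx : x ∈ c.support) :
    ∃ y z, y ≠ z ∧ s(x, y) ∈ c.edges ∧ s(x, z) ∈ c.edges := by
  have hc' : (c.rotate x hx).IsCycle := hc.rotate hx
  have hperm := (c.rotate_edges x hx).perm
  suffices h : ∃ y z, y ≠ z ∧ s(x, y) ∈ (c.rotate x hx).edges ∧ s(x, z) ∈ (c.rotate x hx).edges by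
    obtain ⟨y, z, hyz, h1, h2⟩ := h
    exact ⟨y, z, hyz, hperm.mem_iff.mp h1, hperm.mem_iff.mp h2⟩
  obtain ⟨y, hadj, q, heq⟩ := Walk.not_nil_iff.mp hc'.not_nil
  have hlen : 3 ≤ (c.rotate x hx).length := hc'.three_le_length
  have hqlen : 2 ≤ q.length := by
    have : (c.rotate x hx).length = q.length + 1 := by rw [heq]; simp
    omega
  have hqrev : ¬ q.reverse.Nil := by
    rw [Walk.nil_iff_length_eq]
    simp only [Walk.length_reverse]
    omega
  obtain ⟨z, hadj2, q2, heq2⟩ := Walk.not_nil_iff.mp hqrev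
  have hzq : s(x, z) ∈ q.edges := by
    have : s(x, z) ∈ q.reverse.edges := by rw [heq2]; simp
    rwa [Walk.edges_reverse, List.mem_reverse] at this
  have hedges : (c.rotate x hx).edges = s(x, y) :: q.edges := by rw [heq]; simp
  have hnodup : (c.rotate x hx).edges.Nodup := hc'.edges_nodup
  rw [hedges] at hnodup
  have hxy_notin : s(x, y) ∉ q.edges := (List.nodup_cons.mp hnodup).1
  refine ⟨y, z, ?_, ?_, ?_⟩
  · rintro rfl; exact hxy_notin hzq
  · rw [hedges]; exact List.mem_cons_self
  · rw [hedges]; exact List.mem_cons_of_mem _ hzq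

lemma walk_lift {H : SimpleGraph X} {H' : SimpleGraph Y} (f : X → Y)
    (hrefl : ∀ a b, H'.Adj (f a) (f b) → H.Adj a b) :
    ∀ {y z : Y} (P : H'.Walk y z) {a : X}, y = f a →
      (∀ x ∈ P.support, x ∈ Set.range f) →
      ∃ (b : X) (Q : H.Walk a b), z = f b ∧ P.support = Q.support.map f ∧
        P.edges = Q.edges.map (Sym2.map f) := by
  intro y z P
  induction P with
  | nil =>
    intro a ha hs
    exact ⟨a, Walk.nil, ha, by simp [ha], by simp⟩
  | @cons u m w h q ih =>
    intro a ha hs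
    obtain ⟨c, hc⟩ := hs m (by simp)
    have hadj : H.Adj a c := hrefl a c (by rw [← ha, hc]; exact h)
    obtain ⟨b, Q, hb, hsup, hedg⟩ := ih hc.symm (fun x hx => hs x (by simp [hx]))
    refine ⟨b, Walk.cons hadj Q, hb, ?_, ?_⟩
    · simp [hsup, ha]
    · simp [hedg, ha, hc.symm, Sym2.map_pair_eq]

lemma cycle_lift {H : SimpleGraph X} {H' : SimpleGraph Y} {f : X → Y}
    (hinj : Function.Injective f)
    (hrefl : ∀ a b, H'.Adj (f a) (f b) → H.Adj a b) (hac : H.IsAcyclic)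
    {y : Y} (P : H'.Walk y y) (hs : ∀ x ∈ P.support, x ∈ Set.range f) : ¬ P.IsCycle := by
  intro hP
  obtain ⟨a, ha⟩ := hs y P.start_mem_support
  obtain ⟨b, Q, hb, hsup, hedg⟩ := walk_lift f hrefl P ha.symm hs
  obtain rfl : a = b := hinj (by rw [ha]; exact hb)
  refine hac Q ?_
  rw [Walk.isCycle_def] at hP ⊢
  obtain ⟨ht, hne, hnd⟩ := hP
  refine ⟨?_, ?_, ?_⟩
  · rw [Walk.isTrail_def]
    have := ht.edges_nodup
    rw [hedg] at this
    exact this.of_map _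
  · intro hQ
    subst hQ
    simp at hedg
    have h3 := (Walk.isCycle_def _ |>.mpr ⟨ht, hne, hnd⟩).three_le_length
    rw [Walk.nil_iff_length_eq.mp hedg] at h3
    simp at h3
  · have : P.support.tail = (Q.support.tail).map f := by
      rw [hsup, ← List.map_tail]
    rw [this] at hnd
    exact hnd.of_map _

end ExtAux

section Constructions
open ExtVert

variable {V : Type*} {G : SimpleGraph V} {v1 : V} {p q : ℕ}

lemma base_inj : Function.Injective (ExtVert.base : V → ExtVert V p q) := by
  intro a b h; injection h

lemma extGraph_adj {x y : ExtVert V p q} :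
    (extGraph G v1 p q).Adj x y ↔ x ≠ y ∧ (extRel G v1 x y ∨ extRel G v1 y x) :=
  SimpleGraph.fromRel_adj _ _ _

lemma adj_base_base {a b : V} :
    (extGraph G v1 p q).Adj (base a) (base b) ↔ G.Adj a b := by
  rw [extGraph_adj]
  constructor
  · rintro ⟨-, h | h⟩
    · exact h
    · exact G.adj_symm h
  · intro h
    exact ⟨fun hh => (G.ne_of_adj h) (base_inj hh), Or.inl h⟩

lemma adj_mid {i : Fin p} {j : Fin q} {x : ExtVert V p q}
    (h : (extGraph G v1 p q).Adj (mid i j) x) : x = ahat i ∨ x = base v1 := by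
  rw [extGraph_adj] at h
  obtain ⟨-, h | h⟩ := h <;> cases x <;> simp_all [extRel]

lemma adj_ahat {i : Fin p} {x : ExtVert V p q}
    (h : (extGraph G v1 p q).Adj (ahat i) x) : ∃ j', x = mid i j' := by
  rw [extGraph_adj] at h
  obtain ⟨-, h | h⟩ := h <;> cases x <;> simp_all [extRel]

lemma adj_base_cases {a : V} {x : ExtVert V p q}
    (h : (extGraph G v1 p q).Adj (base a) x) :
    (∃ b, x = base b ∧ G.Adj a b) ∨ (∃ i j', x = mid i j' ∧ a = v1) := by
  rw [extGraph_adj] at h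
  obtain ⟨-, h | h⟩ := h <;> cases x <;> simp_all [extRel]
  exact G.adj_symm h

/-- Adjacency of the `j`-th extended tree. -/
def extAdjB (A : G.Subgraph) (v1 : V) (j : Fin q) :
    ExtVert V p q → ExtVert V p q → Prop
  | .base a, .base b => A.Adj a b
  | .ahat i, .mid i' j' => i = i' ∧ j' = j
  | .mid i' j', .ahat i => i = i' ∧ j' = j
  | .mid _ j', .base b => b = v1 ∧ j' = j
  | .base b, .mid _ j' => b = v1 ∧ j' = j
  | _, _ => False

/-- The `j`-th extended tree, as a subgraph of `G'`. -/
def extSub (A : G.Subgraph) (hv1 : v1 ∈ A.verts) (j : Fin q) :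
    (extGraph G v1 p q).Subgraph where
  verts := base '' A.verts ∪ Set.range ahat ∪ Set.range (fun i => mid i j)
  Adj := extAdjB A v1 j
  adj_sub := by
    rintro x y h
    rw [extGraph_adj]
    cases x <;> cases y <;> simp only [extAdjB] at h
    · exact ⟨fun hh => (G.ne_of_adj (A.adj_sub h)) (base_inj hh), Or.inl (A.adj_sub h)⟩
    · exact ⟨fun hh => (by cases hh), Or.inr h.1⟩
    · exact ⟨fun hh => (by cases hh), Or.inl h.1⟩
    · exact ⟨fun hh => (by cases hh), Or.inl h.1⟩
    · exact ⟨fun hh => (by cases hh), Or.inr h.1⟩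
  edge_vert := by
    rintro x y h
    cases x <;> cases y <;> simp only [extAdjB] at h
    · exact Or.inl (Or.inl ⟨_, A.edge_vert h, rfl⟩)
    · exact Or.inl (Or.inl ⟨_, hv1, by rw [h.1]⟩)
    · exact Or.inl (Or.inr ⟨_, rfl⟩)
    · exact Or.inr ⟨_, by rw [h.2]⟩
    · exact Or.inr ⟨_, by rw [h.2]⟩
  symm := by
    refine ⟨fun x y h => ?_⟩
    cases x <;> cases y <;> simp only [extAdjB] at h ⊢ <;> try exact h
    exact A.adj_symm h

lemma extSub_adj {A : G.Subgraph} {hv1 : v1 ∈ A.verts} {j : Fin q} {x y : ExtVert V p q} :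
    (extSub A hv1 j).Adj x y ↔ extAdjB A v1 j x y := Iff.rfl

lemma mem_extSub_base {A : G.Subgraph} {hv1 : v1 ∈ A.verts} {j : Fin q} {a : V} :
    (ExtVert.base a : ExtVert V p q) ∈ (extSub A hv1 j).verts ↔ a ∈ A.verts := by
  simp [extSub, base_inj.eq_iff]

lemma mem_extSub_ahat {A : G.Subgraph} {hv1 : v1 ∈ A.verts} {j : Fin q} {i : Fin p} :
    ahat i ∈ (extSub A hv1 j).verts := by
  simp [extSub]

lemma mem_extSub_mid {A : G.Subgraph} {hv1 : v1 ∈ A.verts} {j j' : Fin q} {i : Fin p} :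
    mid i j' ∈ (extSub A hv1 j).verts ↔ j' = j := by
  simp [extSub, ExtVert.mid.injEq, eq_comm]

end Constructions

section TreeLemmas
open ExtVert SimpleGraph

variable {V : Type*} {G : SimpleGraph V} {v1 : V} {p q : ℕ}

lemma extAdjB_of_ahat {A : G.Subgraph} {j : Fin q} {i : Fin p} {w : ExtVert V p q}
    (h : extAdjB A v1 j (ahat i) w) : w = mid i j := by
  cases w with
  | base a => exact h.elim
  | ahat i' => exact h.elim
  | mid i' j' => obtain ⟨rfl, rfl⟩ := h; rfl

lemma extAdjB_of_mid {A : G.Subgraph} {j j' : Fin q} {i : Fin p} {w : ExtVert V p q}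
    (h : extAdjB A v1 j (mid i j') w) : w = ahat i ∨ w = base v1 := by
  cases w with
  | base a => exact Or.inr (by rw [h.1])
  | ahat i' => exact Or.inl (by rw [h.1])
  | mid i' j'' => exact h.elim

/-- The inclusion homomorphism from `A.coe` into `(extSub A hv1 j).coe`. -/
def extHom (A : G.Subgraph) (hv1 : v1 ∈ A.verts) (j : Fin q) :
    A.coe →g ((extSub (p := p) A hv1 j).coe) where
  toFun x := ⟨base x.1, mem_extSub_base.mpr x.2⟩
  map_rel' := fun hab => hab

lemma extSub_isTree (A : G.Subgraph) (hv1 : v1 ∈ A.verts) (hA : A.coe.IsTree) (j : Fin q) :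
    ((extSub (p := p) A hv1 j).coe).IsTree := by
  classical
  have hroot : (base v1 : ExtVert V p q) ∈ (extSub A hv1 j).verts := mem_extSub_base.mpr hv1
  constructor
  · -- Connected
    have midreach : ∀ i : Fin p,
        (extSub A hv1 j).coe.Reachable ⟨mid i j, mem_extSub_mid.mpr rfl⟩ ⟨base v1, hroot⟩ :=
      fun i => SimpleGraph.Adj.reachable (show extAdjB A v1 j (mid i j) (base v1) from ⟨rfl, rfl⟩)
    have key : ∀ x : (extSub A hv1 j).verts,
        (extSub A hv1 j).coe.Reachable x ⟨base v1, hroot⟩ := by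
      rintro ⟨x, hx⟩
      cases x with
      | base a =>
        have ha : a ∈ A.verts := mem_extSub_base.mp hx
        exact (hA.isConnected.preconnected ⟨a, ha⟩ ⟨v1, hv1⟩).map (extHom A hv1 j)
      | ahat i =>
        have h1 : (extSub A hv1 j).coe.Adj ⟨ahat i, hx⟩ ⟨mid i j, mem_extSub_mid.mpr rfl⟩ :=
          ⟨rfl, rfl⟩
        exact h1.reachable.trans (midreach i)
      | mid i j' =>
        obtain rfl : j' = j := mem_extSub_mid.mp hx
        exact midreach i
    have : Nonempty ((extSub A hv1 j).verts) := ⟨⟨base v1, hroot⟩⟩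
    exact ⟨fun x y => (key x).trans (key y).symm⟩
  · -- Acyclic
    intro u c hc
    have hnoahat : ∀ (i : Fin p) (h : ahat i ∈ (extSub A hv1 j).verts),
        (⟨ahat i, h⟩ : (extSub A hv1 j).verts) ∉ c.support := by
      intro i h hmem
      obtain ⟨y, z, hyz, h1, h2⟩ := ExtAux.cycle_two_edges hc hmem
      have hy : y.1 = mid i j := extAdjB_of_ahat (c.adj_of_mem_edges h1)
      have hz : z.1 = mid i j := extAdjB_of_ahat (c.adj_of_mem_edges h2)
      exact hyz (Subtype.ext (hy.trans hz.symm))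
    have hnomid : ∀ (i : Fin p) (h : mid i j ∈ (extSub A hv1 j).verts),
        (⟨mid i j, h⟩ : (extSub A hv1 j).verts) ∉ c.support := by
      intro i h hmem
      obtain ⟨y, z, hyz, h1, h2⟩ := ExtAux.cycle_two_edges hc hmem
      have hy := extAdjB_of_mid (c.adj_of_mem_edges h1)
      have hz := extAdjB_of_mid (c.adj_of_mem_edges h2)
      rcases hy with hy | hy
      · have hy' : y = ⟨ahat i, by rw [← hy]; exact y.2⟩ := Subtype.ext hy
        exact hnoahat i _ (hy' ▸ c.snd_mem_support_of_mem_edges h1)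
      · rcases hz with hz | hz
        · have hz' : z = ⟨ahat i, by rw [← hz]; exact z.2⟩ := Subtype.ext hz
          exact hnoahat i _ (hz' ▸ c.snd_mem_support_of_mem_edges h2)
        · exact hyz (Subtype.ext (hy.trans hz.symm))
    have hall : ∀ x ∈ c.support,
        x ∈ Set.range (fun a : A.verts =>
          (⟨base a.1, mem_extSub_base.mpr a.2⟩ : (extSub A hv1 j).verts)) := by
      rintro ⟨x, hx⟩ hmem
      cases x with
      | base a => exact ⟨⟨a, mem_extSub_base.mp hx⟩, rfl⟩
      | ahat i => exact absurd hmem (hnoahat i hx)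
      | mid i j' =>
        obtain rfl : j' = j := mem_extSub_mid.mp hx
        exact absurd hmem (hnomid i hx)
    refine ExtAux.cycle_lift ?_ ?_ hA.2 c hall hc
    · intro a b h
      exact Subtype.ext (base_inj (congrArg Subtype.val h))
    · intro a b h
      exact h

lemma mem_extS_base {v1 v2 v3 v4 : V} {a : V} :
    (ExtVert.base a : ExtVert V p q) ∈ extS v1 v2 v3 v4 p q ↔ a ∈ ({v1, v2, v3, v4} : Set V) := by
  simp [extS, base_inj.eq_iff]

lemma mem_extS_ahat {v1 v2 v3 v4 : V} {i : Fin p} :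
    (ExtVert.ahat i : ExtVert V p q) ∈ extS v1 v2 v3 v4 p q := Or.inr ⟨i, rfl⟩

lemma mem_extS_mid {v1 v2 v3 v4 : V} {i : Fin p} {j : Fin q} :
    (ExtVert.mid i j : ExtVert V p q) ∉ extS v1 v2 v3 v4 p q := by
  simp [extS]

end TreeLemmas

section Reverse
open ExtVert SimpleGraph

variable {V : Type*} {G : SimpleGraph V} {v1 : V} {p q : ℕ}

/-- Restriction of a subgraph of `G'` to the base vertices. -/
def restrSub (B : (extGraph G v1 p q).Subgraph) : G.Subgraph where
  verts := {a : V | base a ∈ B.verts}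
  Adj a b := B.Adj (base a) (base b)
  adj_sub := fun h => adj_base_base.mp (B.adj_sub h)
  edge_vert := fun h => B.edge_vert h
  symm := ⟨fun _ _ h => B.adj_symm h⟩

/-- Target of a vertex of `G'`: itself for base vertices, `v1` otherwise. -/
def tgt (v1 : V) : ExtVert V p q → V
  | .base a => a
  | _ => v1

lemma tgt_mem {B : (extGraph G v1 p q).Subgraph} (hv1B : base v1 ∈ B.verts)
    {x : ExtVert V p q} (hx : x ∈ B.verts) : base (tgt v1 x) ∈ B.verts := by
  cases x <;> first | exact hx | exact hv1B

/-- Inclusion homomorphism from the restriction into `B.coe`. -/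
def restrHom (B : (extGraph G v1 p q).Subgraph) : (restrSub B).coe →g B.coe where
  toFun x := ⟨base x.1, x.2⟩
  map_rel' := fun h => h

lemma restr_isTree (B : (extGraph G v1 p q).Subgraph) (hv1B : base v1 ∈ B.verts)
    (hB : B.coe.IsTree) : (restrSub B).coe.IsTree := by
  constructor
  · -- Connected
    have key : ∀ (b : V) (hb : base b ∈ B.verts) (n : ℕ) (x : B.verts)
        (P : B.coe.Walk x ⟨base b, hb⟩), P.length ≤ n →
        (restrSub B).coe.Reachable ⟨tgt v1 x.1, tgt_mem hv1B x.2⟩ ⟨b, hb⟩ := by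
      intro b hb n
      induction n with
      | zero =>
        intro x P hlen
        cases P with
        | nil => exact Reachable.refl _
        | cons h P' => simp at hlen
      | succ n ih =>
        intro x P hlen
        cases P with
        | nil => exact Reachable.refl _
        | @cons _ y _ hadj P' =>
          have ihP : (restrSub B).coe.Reachable ⟨tgt v1 y.1, tgt_mem hv1B y.2⟩ ⟨b, hb⟩ :=
            ih y P' (by simp only [SimpleGraph.Walk.length_cons] at hlen; omega)
          have hG' : (extGraph G v1 p q).Adj x.1 y.1 := B.adj_sub hadj
          obtain ⟨xv, hxv⟩ := x
          obtain ⟨yv, hyv⟩ := y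
          cases xv with
          | base a =>
            rcases adj_base_cases hG' with ⟨c, hyc, hGadj⟩ | ⟨i, j', hyc, rfl⟩
            · subst hyc
              have hstep : (restrSub B).coe.Adj ⟨a, hxv⟩ ⟨c, hyv⟩ := hadj
              exact hstep.reachable.trans ihP
            · subst hyc
              exact ihP
          | ahat i =>
            obtain ⟨j', hyc⟩ := adj_ahat hG'
            subst hyc
            exact ihP
          | mid i j' =>
            rcases adj_mid hG' with hyc | hyc <;> subst hyc <;> exact ihP
    have : Nonempty ((restrSub (p := p) (q := q) B).verts) := ⟨⟨v1, hv1B⟩⟩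
    refine ⟨fun x y => ?_⟩
    obtain ⟨a, ha⟩ := x
    obtain ⟨b, hb⟩ := y
    obtain ⟨P⟩ := hB.1.preconnected ⟨base a, ha⟩ ⟨base b, hb⟩
    exact key b hb P.length ⟨base a, ha⟩ P le_rfl
  · -- Acyclic
    intro u c hc
    have hinj : Function.Injective
        (fun x : (restrSub (p := p) (q := q) B).verts => (⟨base x.1, x.2⟩ : B.verts)) := by
      intro a b h
      exact Subtype.ext (base_inj (congrArg Subtype.val h))
    have hmap := (SimpleGraph.Walk.map_isCycle_iff_of_injective
      (f := restrHom B) (p := c) hinj).mpr hc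
    exact hB.2 _ hmap

end Reverse

/-- With `S = {v₁,v₂,v₃,v₄}` a 4-subset of `V(G)`, `k₁ ≥ 5`, `k₂ ≥ 2`, and `G'`, `S'` as in
the construction (adding `k₁ - 4` vertices `â^i`, each joined to `v₁` by `k₂` internally
disjoint paths of length two): `κ_{G'}(S') ≥ k₂ ↔ κ_G(S) ≥ k₂`. -/
theorem ext_reduction_iff {V : Type*} (G : SimpleGraph V) (v1 v2 v3 v4 : V)
    (h12 : v1 ≠ v2) (h13 : v1 ≠ v3) (h14 : v1 ≠ v4)
    (h23 : v2 ≠ v3) (h24 : v2 ≠ v4) (h34 : v3 ≠ v4)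
    (k1 k2 : ℕ) (hk1 : 5 ≤ k1) (hk2 : 2 ≤ k2) :
    (∃ F : Fin k2 → (extGraph G v1 (k1 - 4) k2).Subgraph,
        IsIDTrees (extGraph G v1 (k1 - 4) k2) (extS v1 v2 v3 v4 (k1 - 4) k2) F) ↔
      (∃ F : Fin k2 → G.Subgraph, IsIDTrees G ({v1, v2, v3, v4} : Set V) F) := by
  constructor
  · -- G' trees → G trees
    rintro ⟨F, hF⟩
    refine ⟨fun j => restrSub (F j), ?_, ?_⟩
    · intro j
      have hS' := (hF.1 j).1
      have hv1B : ExtVert.base v1 ∈ (F j).verts :=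
        hS' (Or.inl ⟨v1, Or.inl rfl, rfl⟩)
      refine ⟨?_, restr_isTree (F j) hv1B (hF.1 j).2⟩
      intro a ha
      exact hS' (mem_extS_base.mpr ha)
    · intro i j hij
      obtain ⟨hverts, hedges⟩ := hF.2 i j hij
      constructor
      · ext a
        simp only [Set.mem_inter_iff]
        constructor
        · rintro ⟨hh1, hh2⟩
          have : ExtVert.base a ∈ extS v1 v2 v3 v4 (k1 - 4) k2 := by
            rw [← hverts]; exact ⟨hh1, hh2⟩
          exact mem_extS_base.mp this
        · intro ha
          have h : (ExtVert.base a : ExtVert V (k1 - 4) k2) ∈ extS v1 v2 v3 v4 (k1 - 4) k2 :=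
            mem_extS_base.mpr ha
          rw [← hverts] at h
          exact h
      · refine Set.disjoint_left.mpr ?_
        intro e he1 he2
        induction e using Sym2.ind with
        | _ x y =>
          rw [SimpleGraph.Subgraph.mem_edgeSet] at he1 he2
          exact Set.disjoint_left.mp hedges (SimpleGraph.Subgraph.mem_edgeSet.mpr he1)
            (SimpleGraph.Subgraph.mem_edgeSet.mpr he2)
  · -- G trees → G' trees
    rintro ⟨F, hF⟩
    have hv1 : ∀ j, v1 ∈ (F j).verts := fun j => (hF.1 j).1 (Set.mem_insert _ _)
    refine ⟨fun j => extSub (F j) (hv1 j) j, ?_, ?_⟩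
    · intro j
      refine ⟨?_, extSub_isTree (F j) (hv1 j) (hF.1 j).2 j⟩
      rintro x (⟨v, hv, rfl⟩ | ⟨i, rfl⟩)
      · exact mem_extSub_base.mpr ((hF.1 j).1 hv)
      · exact mem_extSub_ahat
    · intro i j hij
      obtain ⟨hverts, hedges⟩ := hF.2 i j hij
      constructor
      · ext x
        cases x with
        | base a =>
          simp only [Set.mem_inter_iff, mem_extSub_base, mem_extS_base]
          rw [← hverts]
          exact Iff.rfl
        | ahat i' =>
          simp only [Set.mem_inter_iff]
          exact iff_of_true ⟨mem_extSub_ahat, mem_extSub_ahat⟩ mem_extS_ahat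
        | mid i' j'' =>
          simp only [Set.mem_inter_iff, mem_extSub_mid]
          refine iff_of_false ?_ mem_extS_mid
          rintro ⟨rfl, rfl⟩
          exact hij rfl
      · refine Set.disjoint_left.mpr ?_
        intro e he1 he2
        induction e using Sym2.ind with
        | _ x y =>
          rw [SimpleGraph.Subgraph.mem_edgeSet] at he1 he2
          rw [extSub_adj] at he1 he2
          cases x <;> cases y <;> simp only [extAdjB] at he1 he2
          · exact Set.disjoint_left.mp hedges (SimpleGraph.Subgraph.mem_edgeSet.mpr he1)
              (SimpleGraph.Subgraph.mem_edgeSet.mpr he2)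
          · exact hij (he1.2.symm.trans he2.2)
          · exact hij (he1.2.symm.trans he2.2)
          · exact hij (he1.2.symm.trans he2.2)
          · exact hij (he1.2.symm.trans he2.2)
end

section
/- Let G be a graph, let S = {v_1, v_2, v_3, v_4} be a 4-subset of V(G), and let k_1 ≥ 5 and k_2 ≥ 2 be integers. Construct G' from G by adding k_1 − 4 new vertices â^1, …, â^{k_1−4} and, for each 1 ≤ i ≤ k_1 − 4, adding k_2 internally disjoint paths â^i a^i_j v_1 (1 ≤ j ≤ k_2) of length two through new, pairwise distinct vertices a^i_j, and let S' = S ∪ {â^1, …, â^{k_1−4}}. If G' contains k_2 internally disjoint trees connecting S', then G contains k_2 internally disjoint trees connecting S. -/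
open SimpleGraph

def restrictSub {V : Type*} (G : SimpleGraph V) (v1 : V) {p q : ℕ}
    (H : (extGraph G v1 p q).Subgraph) : G.Subgraph where
  verts := {v | ExtVert.base v ∈ H.verts}
  Adj v w := H.Adj (.base v) (.base w)
  adj_sub := by
    intro v w h
    have h2 := H.adj_sub h
    rw [extGraph, SimpleGraph.fromRel_adj] at h2
    obtain ⟨-, h2 | h2⟩ := h2
    · exact h2
    · exact h2.symm
  edge_vert := by intro v w h; exact H.edge_vert h
  symm := by constructor; intro v w h; exact H.adj_symm h

def retr {V : Type*} (v1 : V) {p q : ℕ} : ExtVert V p q → V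
  | .base v => v
  | _ => v1

lemma walk_push {V : Type*} {G : SimpleGraph V} {v1 : V} {p q : ℕ}
    {H : (extGraph G v1 p q).Subgraph} {x y : H.verts}
    (pw : H.coe.Walk x y)
    (hy : retr v1 y.1 ∈ (restrictSub G v1 H).verts) :
    ∃ hx : retr v1 x.1 ∈ (restrictSub G v1 H).verts,
      (restrictSub G v1 H).coe.Reachable ⟨retr v1 x.1, hx⟩ ⟨retr v1 y.1, hy⟩ := by
  induction pw with
  | nil => exact ⟨hy, Reachable.refl _⟩
  | @cons x z y h pw ih =>
    obtain ⟨hz, hr⟩ := ih hy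
    have hadj : H.Adj x.1 z.1 := h
    have h2 := H.adj_sub hadj
    simp only [extGraph, SimpleGraph.fromRel_adj] at h2
    obtain ⟨-, h2⟩ := h2
    obtain ⟨xv, hxv⟩ := x
    obtain ⟨zv, hzv⟩ := z
    cases xv with
    | base u =>
      cases zv with
      | base w =>
        have hAdj : (restrictSub G v1 H).Adj u w := hadj
        refine ⟨(restrictSub G v1 H).edge_vert hAdj, ?_⟩
        exact (Adj.reachable (by exact hAdj :
          (restrictSub G v1 H).coe.Adj ⟨u, _⟩ ⟨w, hz⟩)).trans hr
      | ahat i => simp only [extRel] at h2; exact absurd h2 (by simp)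
      | mid i j =>
        simp only [extRel] at h2
        have hu : u = v1 := by tauto
        subst hu
        exact ⟨hz, hr⟩
    | ahat i =>
      cases zv with
      | base w => simp only [extRel] at h2; exact absurd h2 (by simp)
      | ahat i' => simp only [extRel] at h2; exact absurd h2 (by simp)
      | mid i' j => exact ⟨hz, hr⟩
    | mid i j =>
      cases zv with
      | base w =>
        simp only [extRel] at h2
        have hw : w = v1 := by tauto
        subst hw
        exact ⟨hz, hr⟩
      | ahat i' => exact ⟨hz, hr⟩
      | mid i' j' => simp only [extRel] at h2; exact absurd h2 (by simp)

lemma restrict_isTree {V : Type*} {G : SimpleGraph V} {v1 : V} {p q : ℕ}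
    {H : (extGraph G v1 p q).Subgraph} (htree : H.coe.IsTree)
    (hv1 : ExtVert.base v1 ∈ H.verts) : (restrictSub G v1 H).coe.IsTree := by
  constructor
  · haveI : Nonempty (restrictSub G v1 H).verts := ⟨⟨v1, hv1⟩⟩
    constructor
    intro u w
    obtain ⟨pw⟩ := htree.isConnected.preconnected
      (⟨ExtVert.base u.1, u.2⟩ : H.verts) ⟨ExtVert.base w.1, w.2⟩
    obtain ⟨hx, hr⟩ := walk_push pw (show retr v1 (ExtVert.base w.1) ∈ _ from w.2)
    exact hr
  · intro v c hc
    let f : (restrictSub G v1 H).coe →g H.coe :=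
      { toFun := fun a => ⟨.base a.1, a.2⟩
        map_rel' := fun hab => hab }
    have finj : Function.Injective f := by
      intro a b hab
      have h3 : (ExtVert.base a.1 : ExtVert V p q) = ExtVert.base b.1 :=
        congrArg Subtype.val hab
      exact Subtype.ext (by injection h3)
    exact htree.IsAcyclic (c.map f) (hc.map finj)

lemma base_mem_extS {V : Type*} {v1 v2 v3 v4 v : V} {p q : ℕ} :
    (ExtVert.base v : ExtVert V p q) ∈ extS v1 v2 v3 v4 p q ↔
      v ∈ ({v1, v2, v3, v4} : Set V) := by
  constructor
  · rintro (⟨w, hw, hbw⟩ | ⟨i, hi⟩)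
    · injection hbw with h; exact h ▸ hw
    · exact absurd hi (by simp)
  · intro hv; exact Or.inl ⟨v, hv, rfl⟩

/-- If `G'` contains `k₂` internally disjoint trees connecting
`S' = {v₁,v₂,v₃,v₄} ∪ {â^1, …, â^{k₁-4}}`, then `G` contains `k₂` internally disjoint
trees connecting `S = {v₁,v₂,v₃,v₄}`. -/
theorem ext_trees_to_trees {V : Type*} (G : SimpleGraph V) (v1 v2 v3 v4 : V)
    (h12 : v1 ≠ v2) (h13 : v1 ≠ v3) (h14 : v1 ≠ v4)
    (h23 : v2 ≠ v3) (h24 : v2 ≠ v4) (h34 : v3 ≠ v4)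
    (k1 k2 : ℕ) (hk1 : 5 ≤ k1) (hk2 : 2 ≤ k2)
    (F' : Fin k2 → (extGraph G v1 (k1 - 4) k2).Subgraph)
    (hF' : IsIDTrees (extGraph G v1 (k1 - 4) k2) (extS v1 v2 v3 v4 (k1 - 4) k2) F') :
    ∃ F : Fin k2 → G.Subgraph, IsIDTrees G ({v1, v2, v3, v4} : Set V) F := by
  refine ⟨fun i => restrictSub G v1 (F' i), ?_, ?_⟩
  · intro i
    obtain ⟨hsub, htree⟩ := hF'.1 i
    refine ⟨?_, ?_⟩
    · intro v hv
      exact hsub (base_mem_extS.2 hv)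
    · exact restrict_isTree htree (hsub (base_mem_extS.2 (Or.inl rfl)))
  · intro i j hij
    obtain ⟨hverts, hdisj⟩ := hF'.2 i j hij
    constructor
    · ext v
      have : v ∈ (restrictSub G v1 (F' i)).verts ∩ (restrictSub G v1 (F' j)).verts ↔
          ExtVert.base v ∈ (F' i).verts ∩ (F' j).verts := Iff.rfl
      rw [this, hverts, base_mem_extS]
    · rw [Set.disjoint_left] at hdisj ⊢
      intro e he he'
      induction e with
      | _ a b =>
        rw [Subgraph.mem_edgeSet] at he he'
        exact hdisj (Subgraph.mem_edgeSet.2 he) (Subgraph.mem_edgeSet.2 he')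
end

section
/- Let φ = c_1 ∧ … ∧ c_m be a 3-CNF formula over variables x_1, …, x_n (each clause c_j is a set of three literals, a literal being x_i or its negation x̄_i), with n ≥ 1 and m ≥ 1. Define the graph G_φ with vertex set {x̂_i : 1 ≤ i ≤ n} ∪ {x_i : 1 ≤ i ≤ n} ∪ {x̄_i : 1 ≤ i ≤ n} ∪ {c_j : 1 ≤ j ≤ m} ∪ {a}, and edge set consisting of: x̂_i x_i and x̂_i x̄_i for 1 ≤ i ≤ n; x_i c_j whenever the literal x_i occurs in clause c_j and x̄_i c_j whenever the literal x̄_i occurs in clause c_j; x_1 x_i, x_1 x̄_i, x̄_1 x_i, x̄_1 x̄_i for 2 ≤ i ≤ n; and a x_i, a x̄_i for 1 ≤ i ≤ n and a c_j for 1 ≤ j ≤ m. Let S = {x̂_i : 1 ≤ i ≤ n} ∪ {c_j : 1 ≤ j ≤ m}. Then G_φ contains two internally disjoint trees connecting S (i.e., κ_{G_φ}(S) ≥ 2) if and only if φ is satisfiable, i.e., there exists a truth assignment t of the variables x_1, …, x_n under which every clause c_j contains a true literal. -/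
open SimpleGraph

/-- Vertices of the graph `G_φ` built from a 3-CNF formula with `n` variables and `m`
clauses: `xhat i` is `x̂_i`, `lit true i` is the literal `x_i`, `lit false i` is the
literal `x̄_i`, `clause j` is `c_j`, and `a` is the extra vertex. -/
inductive SatVert (n m : ℕ) where
  | xhat (i : Fin n)
  | lit (b : Bool) (i : Fin n)
  | clause (j : Fin m)
  | a

/-- Base adjacency of `G_φ`, where a clause `c j` is the set of its (at most three)
literals, a literal being a pair `(b, i)` standing for `x_i` if `b = true` and for
`x̄_i` if `b = false`. The vertices `x_1, x̄_1` (index `0`) are joined to all `x_i, x̄_i`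
with `i ≥ 2` (index `≠ 0`), and `a` is joined to all literal and clause vertices. -/
def satRel {n m : ℕ} (c : Fin m → Finset (Bool × Fin n)) :
    SatVert n m → SatVert n m → Prop
  | .xhat i, .lit _ i' => i = i'
  | .lit b i, .clause j => (b, i) ∈ c j
  | .lit _ i, .lit _ i' => i.val = 0 ∧ i'.val ≠ 0
  | .a, .lit _ _ => True
  | .a, .clause _ => True
  | _, _ => False

/-- The graph `G_φ` of the 3-SAT reduction. -/
def satGraph {n m : ℕ} (c : Fin m → Finset (Bool × Fin n)) : SimpleGraph (SatVert n m) :=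
  SimpleGraph.fromRel (satRel c)

/-- The set `S = {x̂_i : 1 ≤ i ≤ n} ∪ {c_j : 1 ≤ j ≤ m}`. -/
def satS (n m : ℕ) : Set (SatVert n m) :=
  Set.range SatVert.xhat ∪ Set.range SatVert.clause


/-- A graph with a root, a rank function and a parent map is a tree. -/
lemma tree_of_parent {V : Type*} {G : SimpleGraph V} (r : V) (f : V → ℕ) (p : V → V)
    (hr : f r = 0) (hpr : p r = r)
    (hadj : ∀ v, v ≠ r → G.Adj v (p v))
    (hlt : ∀ v, v ≠ r → f (p v) < f v)
    (hne : ∀ u v, G.Adj u v → f u ≠ f v)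
    (huniq : ∀ u v, G.Adj u v → f u < f v → u = p v) :
    G.IsTree := by
  have hpw : ∀ w, f (p w) ≤ f w := by
    intro w
    by_cases h : w = r
    · subst h; rw [hpr]
    · exact (hlt w h).le
  have hiter : ∀ k w, f (p^[k] w) ≤ f w := by
    intro k
    induction k with
    | zero => simp
    | succ k ih =>
      intro w
      rw [Function.iterate_succ_apply]
      exact (ih (p w)).trans (hpw w)
  have hbridge : ∀ v, v ≠ r →
      ¬ (G \ SimpleGraph.fromEdgeSet {s(v, p v)}).Reachable v (p v) := by
    intro v hv hre
    obtain ⟨q⟩ := hre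
    set D : Set V := {w | ∃ k, p^[k] w = v} with hD
    have hstep : ∀ w x, (G \ SimpleGraph.fromEdgeSet {s(v, p v)}).Adj w x → w ∈ D → x ∈ D := by
      intro w x hwx hw
      rw [SimpleGraph.sdiff_adj, SimpleGraph.fromEdgeSet_adj] at hwx
      obtain ⟨hwx, hnot⟩ := hwx
      obtain ⟨k, hk⟩ := hw
      rcases (hne w x hwx).lt_or_gt with h | h
      · have hw' : w = p x := huniq w x hwx h
        exact ⟨k + 1, by rw [Function.iterate_succ_apply, ← hw', hk]⟩
      · have hx : x = p w := huniq x w hwx.symm h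
        cases k with
        | zero =>
          simp only [Function.iterate_zero, id_eq] at hk
          subst hk
          exact absurd ⟨by rw [hx]; exact Set.mem_singleton _, hwx.ne⟩ hnot
        | succ k =>
          refine ⟨k, ?_⟩
          rw [hx, ← Function.iterate_succ_apply, hk]
    have hwalk : ∀ {w x : V} (_ : (G \ SimpleGraph.fromEdgeSet {s(v, p v)}).Walk w x),
        w ∈ D → x ∈ D := by
      intro w x q
      induction q with
      | nil => exact id
      | cons h q ih => exact fun hw => ih (hstep _ _ h hw)
    obtain ⟨k, hk⟩ := hwalk q ⟨0, rfl⟩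
    have : f v ≤ f (p v) := by have h' := hiter k (p v); rw [hk] at h'; exact h'
    exact absurd (hlt v hv) this.not_gt
  have hreachN : ∀ N v, f v < N → G.Reachable v r := by
    intro N
    induction N with
    | zero => intro v hv; omega
    | succ N ih =>
      intro v hv
      by_cases h : v = r
      · subst h; rfl
      · exact (hadj v h).reachable.trans (ih (p v) (by have := hlt v h; omega))
  have hreach : ∀ v, G.Reachable v r := fun v => hreachN (f v + 1) v (Nat.lt_succ_self _)
  haveI : Nonempty V := ⟨r⟩
  refine ⟨Connected.mk (fun u v => (hreach u).trans (hreach v).symm), ?_⟩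
  rw [SimpleGraph.isAcyclic_iff_forall_adj_isBridge]
  intro u v huv
  rcases (hne u v huv).lt_or_gt with h | h
  · have hu : u = p v := huniq u v huv h
    have hvr : v ≠ r := by intro e; subst e; omega
    rw [show s(u, v) = s(v, p v) by rw [hu, Sym2.eq_swap], SimpleGraph.isBridge_iff]
    exact hbridge v hvr
  · have hv : v = p u := huniq v u huv.symm h
    have hur : u ≠ r := by intro e; subst e; omega
    rw [show s(u, v) = s(u, p u) by rw [hv], SimpleGraph.isBridge_iff]
    exact hbridge u hur

lemma exists_subgraph_adj {V : Type*} {G : SimpleGraph V} {H : G.Subgraph}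
    (ht : H.coe.IsTree) {v w : V} (hv : v ∈ H.verts) (hw : w ∈ H.verts) (hvw : v ≠ w) :
    ∃ x, H.Adj v x := by
  obtain ⟨q⟩ := ht.isConnected.preconnected ⟨v, hv⟩ ⟨w, hw⟩
  have hnn : ¬ q.Nil := Walk.not_nil_of_ne (fun h => hvw (congrArg Subtype.val h))
  exact ⟨(q.getVert 1).1, (Subgraph.coe_adj _ _ _).mp (Walk.adj_snd hnn)⟩

section Trees

variable {n m : ℕ}

/-- Base relation of the first tree. -/
def t1Rel (hn : 0 < n) (t : Fin n → Bool) (σ : Fin m → Bool × Fin n) :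
    SatVert n m → SatVert n m → Prop := fun u v =>
  (∃ i, u = .xhat i ∧ v = .lit (t i) i) ∨
  (∃ i : Fin n, i.val ≠ 0 ∧ u = .lit (t ⟨0, hn⟩) ⟨0, hn⟩ ∧ v = .lit (t i) i) ∨
  (∃ j, u = .clause j ∧ v = .lit (t (σ j).2) (σ j).2)

/-- Vertices of the first tree. -/
def t1V (t : Fin n → Bool) : Set (SatVert n m) := fun v =>
  match v with
  | .xhat _ => True
  | .lit b i => b = t i
  | .clause _ => True
  | .a => False

/-- The first tree of the construction. -/
def tree1 (hn : 0 < n) (c : Fin m → Finset (Bool × Fin n)) (t : Fin n → Bool)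
    (σ : Fin m → Bool × Fin n) (hσ : ∀ j, ((t (σ j).2, (σ j).2) : Bool × Fin n) ∈ c j) :
    (satGraph c).Subgraph where
  verts := t1V t
  Adj u v := t1Rel hn t σ u v ∨ t1Rel hn t σ v u
  adj_sub := by
    have key : ∀ u v, t1Rel hn t σ u v → (satGraph c).Adj u v := by
      rintro u v (⟨i, rfl, rfl⟩ | ⟨i, hi, rfl, rfl⟩ | ⟨j, rfl, rfl⟩) <;>
        rw [satGraph, SimpleGraph.fromRel_adj]
      · exact ⟨fun h => (by cases h), Or.inl rfl⟩
      · refine ⟨fun h => ?_, Or.inl ⟨rfl, hi⟩⟩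
        · rw [SatVert.lit.injEq] at h
          exact hi (h.2 ▸ rfl)
      · exact ⟨fun h => (by cases h), Or.inr (hσ j)⟩
    rintro u v (h | h)
    · exact key u v h
    · exact (key v u h).symm
  edge_vert := by
    have key : ∀ u v, t1Rel hn t σ u v → u ∈ t1V t ∧ v ∈ t1V t := by
      rintro u v (⟨i, rfl, rfl⟩ | ⟨i, hi, rfl, rfl⟩ | ⟨j, rfl, rfl⟩) <;>
        exact ⟨by trivial, by trivial⟩
    rintro u v (h | h)
    · exact (key u v h).1
    · exact (key v u h).2
  symm := by
    constructor
    rintro u v (h | h)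
    · exact Or.inr h
    · exact Or.inl h

/-- Rank function for the first tree. -/
def t1F : SatVert n m → ℕ
  | .lit _ i => if i.val = 0 then 0 else 1
  | .xhat _ => 2
  | .clause _ => 2
  | .a => 0

lemma t1F_xhat (i : Fin n) : t1F (.xhat i : SatVert n m) = 2 := rfl
lemma t1F_clause (j : Fin m) : t1F (.clause j : SatVert n m) = 2 := rfl
lemma t1F_lit_zero (b : Bool) (i : Fin n) (h : i.val = 0) :
    t1F (.lit b i : SatVert n m) = 0 := by simp [t1F, h]
lemma t1F_lit_ne (b : Bool) (i : Fin n) (h : i.val ≠ 0) :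
    t1F (.lit b i : SatVert n m) = 1 := by simp [t1F, h]
lemma t1F_lit_le (b : Bool) (i : Fin n) : t1F (.lit b i : SatVert n m) ≤ 1 := by
  rcases eq_or_ne i.val 0 with h | h
  · rw [t1F_lit_zero _ _ h]; omega
  · rw [t1F_lit_ne _ _ h]

/-- Parent function for the first tree. -/
def t1P (hn : 0 < n) (t : Fin n → Bool) (σ : Fin m → Bool × Fin n) :
    ↥(t1V (n := n) (m := m) t) → ↥(t1V (n := n) (m := m) t)
  | ⟨.xhat i, _⟩ => ⟨.lit (t i) i, rfl⟩
  | ⟨.clause j, _⟩ => ⟨.lit (t (σ j).2) (σ j).2, rfl⟩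
  | ⟨.lit _ _, _⟩ => ⟨.lit (t ⟨0, hn⟩) ⟨0, hn⟩, rfl⟩
  | ⟨.a, h⟩ => False.elim h

lemma tree1_isTree (hn : 0 < n) (c : Fin m → Finset (Bool × Fin n)) (t : Fin n → Bool)
    (σ : Fin m → Bool × Fin n) (hσ : ∀ j, ((t (σ j).2, (σ j).2) : Bool × Fin n) ∈ c j) :
    (tree1 hn c t σ hσ).coe.IsTree := by
  refine tree_of_parent (⟨.lit (t ⟨0, hn⟩) ⟨0, hn⟩, rfl⟩ : ↥(t1V t))
    (fun v => t1F v.1) (t1P hn t σ) (t1F_lit_zero _ _ rfl) rfl ?_ ?_ ?_ ?_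
  · rintro ⟨v, hv⟩ hvr
    cases v with
    | xhat i => exact Or.inl (Or.inl ⟨i, rfl, rfl⟩)
    | clause j => exact Or.inl (Or.inr (Or.inr ⟨j, rfl, rfl⟩))
    | a => exact False.elim hv
    | lit b i =>
      have hb : b = t i := hv
      subst hb
      have hi : i.val ≠ 0 := by
        intro h0
        refine hvr ?_
        have he : i = (⟨0, hn⟩ : Fin n) := Fin.ext h0
        subst he
        rfl
      exact Or.inr (Or.inr (Or.inl ⟨i, hi, rfl, rfl⟩))
  · rintro ⟨v, hv⟩ hvr
    cases v with
    | xhat i =>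
      have := t1F_lit_le (m := m) (t i) i
      show t1F (.lit (t i) i) < t1F (.xhat i)
      rw [t1F_xhat]; omega
    | clause j =>
      have := t1F_lit_le (m := m) (t (σ j).2) (σ j).2
      show t1F (.lit (t (σ j).2) (σ j).2) < t1F (.clause j)
      rw [t1F_clause]; omega
    | a => exact False.elim hv
    | lit b i =>
      have hb : b = t i := hv
      subst hb
      have hi : i.val ≠ 0 := by
        intro h0
        refine hvr ?_
        have he : i = (⟨0, hn⟩ : Fin n) := Fin.ext h0
        subst he
        rfl
      show t1F (.lit (t ⟨0, hn⟩) ⟨0, hn⟩) < t1F (.lit (t i) i)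
      rw [t1F_lit_zero (t ⟨0, hn⟩) ⟨0, hn⟩ rfl, t1F_lit_ne (t i) i hi]
      omega
  · rintro ⟨u, hu⟩ ⟨v, hv⟩ (h | h) <;>
      rcases h with ⟨i, rfl, rfl⟩ | ⟨i, hi, rfl, rfl⟩ | ⟨j, rfl, rfl⟩
    · have := t1F_lit_le (m := m) (t i) i
      show t1F (.xhat i) ≠ t1F (.lit (t i) i)
      rw [t1F_xhat]; omega
    · show t1F (.lit (t ⟨0, hn⟩) ⟨0, hn⟩) ≠ t1F (.lit (t i) i)
      rw [t1F_lit_zero (t ⟨0, hn⟩) ⟨0, hn⟩ rfl, t1F_lit_ne (t i) i hi]; omega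
    · have := t1F_lit_le (m := m) (t (σ j).2) (σ j).2
      show t1F (.clause j) ≠ t1F (.lit (t (σ j).2) (σ j).2)
      rw [t1F_clause]; omega
    · have := t1F_lit_le (m := m) (t i) i
      show t1F (.lit (t i) i) ≠ t1F (.xhat i)
      rw [t1F_xhat]; omega
    · show t1F (.lit (t i) i) ≠ t1F (.lit (t ⟨0, hn⟩) ⟨0, hn⟩)
      rw [t1F_lit_zero (t ⟨0, hn⟩) ⟨0, hn⟩ rfl, t1F_lit_ne (t i) i hi]; omega
    · have := t1F_lit_le (m := m) (t (σ j).2) (σ j).2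
      show t1F (.lit (t (σ j).2) (σ j).2) ≠ t1F (.clause j)
      rw [t1F_clause]; omega
  · rintro ⟨u, hu⟩ ⟨v, hv⟩ (h | h) <;>
      rcases h with ⟨i, rfl, rfl⟩ | ⟨i, hi, rfl, rfl⟩ | ⟨j, rfl, rfl⟩ <;>
      intro hflt
    · exfalso
      have h2 := t1F_lit_le (m := m) (t i) i
      have h3 : t1F (SatVert.xhat i : SatVert n m) < t1F (SatVert.lit (t i) i) := hflt
      rw [t1F_xhat] at h3
      omega
    · exact Subtype.ext rfl
    · exfalso
      have h2 := t1F_lit_le (m := m) (t (σ j).2) (σ j).2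
      have h3 : t1F (SatVert.clause j : SatVert n m) < t1F (SatVert.lit (t (σ j).2) (σ j).2) := hflt
      rw [t1F_clause] at h3
      omega
    · exact Subtype.ext rfl
    · exfalso
      have h3 : t1F (SatVert.lit (t i) i : SatVert n m) < t1F (SatVert.lit (t ⟨0, hn⟩) ⟨0, hn⟩) := hflt
      rw [t1F_lit_zero (t ⟨0, hn⟩) ⟨0, hn⟩ rfl, t1F_lit_ne (t i) i hi] at h3
      omega
    · exact Subtype.ext rfl

end Trees

section Trees2

variable {n m : ℕ}

/-- Base relation of the second tree. -/
def t2Rel (t : Fin n → Bool) : SatVert n m → SatVert n m → Prop := fun u v =>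
  (∃ i, u = .xhat i ∧ v = .lit (!t i) i) ∨
  (∃ i, u = .a ∧ v = .lit (!t i) i) ∨
  (∃ j, u = .a ∧ v = .clause j)

/-- Vertices of the second tree. -/
def t2V (t : Fin n → Bool) : Set (SatVert n m) := fun v =>
  match v with
  | .lit b i => b = !t i
  | _ => True

/-- The second tree of the construction. -/
def tree2 (c : Fin m → Finset (Bool × Fin n)) (t : Fin n → Bool) :
    (satGraph c).Subgraph where
  verts := t2V t
  Adj u v := t2Rel t u v ∨ t2Rel t v u
  adj_sub := by
    have key : ∀ u v, t2Rel t u v → (satGraph c).Adj u v := by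
      rintro u v (⟨i, rfl, rfl⟩ | ⟨i, rfl, rfl⟩ | ⟨j, rfl, rfl⟩) <;>
        rw [satGraph, SimpleGraph.fromRel_adj]
      · exact ⟨fun h => (by cases h), Or.inl rfl⟩
      · exact ⟨fun h => (by cases h), Or.inl trivial⟩
      · exact ⟨fun h => (by cases h), Or.inl trivial⟩
    rintro u v (h | h)
    · exact key u v h
    · exact (key v u h).symm
  edge_vert := by
    have key : ∀ u v : SatVert n m, t2Rel t u v → u ∈ t2V t ∧ v ∈ t2V t := by
      rintro u v (⟨i, rfl, rfl⟩ | ⟨i, rfl, rfl⟩ | ⟨j, rfl, rfl⟩) <;>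
        exact ⟨by trivial, by trivial⟩
    rintro u v (h | h)
    · exact (key u v h).1
    · exact (key v u h).2
  symm := by
    constructor
    rintro u v (h | h)
    · exact Or.inr h
    · exact Or.inl h

/-- Rank function for the second tree. -/
def t2F : SatVert n m → ℕ
  | .a => 0
  | .lit _ _ => 1
  | .clause _ => 1
  | .xhat _ => 2

/-- Parent function for the second tree. -/
def t2P (t : Fin n → Bool) : ↥(t2V (n := n) (m := m) t) → ↥(t2V (n := n) (m := m) t)
  | ⟨.xhat i, _⟩ => ⟨.lit (!t i) i, rfl⟩
  | ⟨_, _⟩ => ⟨.a, trivial⟩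

lemma tree2_isTree (c : Fin m → Finset (Bool × Fin n)) (t : Fin n → Bool) :
    (tree2 c t).coe.IsTree := by
  refine tree_of_parent (⟨.a, trivial⟩ : ↥(t2V t)) (fun v => t2F v.1) (t2P t)
    rfl rfl ?_ ?_ ?_ ?_
  · rintro ⟨v, hv⟩ hvr
    cases v with
    | xhat i => exact Or.inl (Or.inl ⟨i, rfl, rfl⟩)
    | clause j => exact Or.inr (Or.inr (Or.inr ⟨j, rfl, rfl⟩))
    | a => exact absurd rfl hvr
    | lit b i =>
      have hb : b = !t i := hv
      subst hb
      exact Or.inr (Or.inr (Or.inl ⟨i, rfl, rfl⟩))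
  · rintro ⟨v, hv⟩ hvr
    cases v with
    | xhat i => show (1 : ℕ) < 2; omega
    | clause j => show (0 : ℕ) < 1; omega
    | a => exact absurd rfl hvr
    | lit b i => show (0 : ℕ) < 1; omega
  · rintro ⟨u, hu⟩ ⟨v, hv⟩ (h | h) <;>
      rcases h with ⟨i, rfl, rfl⟩ | ⟨i, rfl, rfl⟩ | ⟨j, rfl, rfl⟩
    · show (2 : ℕ) ≠ 1; omega
    · show (0 : ℕ) ≠ 1; omega
    · show (0 : ℕ) ≠ 1; omega
    · show (1 : ℕ) ≠ 2; omega
    · show (1 : ℕ) ≠ 0; omega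
    · show (1 : ℕ) ≠ 0; omega
  · rintro ⟨u, hu⟩ ⟨v, hv⟩ (h | h) <;>
      rcases h with ⟨i, rfl, rfl⟩ | ⟨i, rfl, rfl⟩ | ⟨j, rfl, rfl⟩ <;>
      intro hflt
    · exfalso; have h3 : (2 : ℕ) < 1 := hflt; omega
    · exact Subtype.ext rfl
    · exact Subtype.ext rfl
    · exact Subtype.ext rfl
    · exfalso; have h3 : (1 : ℕ) < 0 := hflt; omega
    · exfalso; have h3 : (1 : ℕ) < 0 := hflt; omega

end Trees2

section SatLemmas

variable {n m : ℕ}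

lemma a_not_mem_satS (hn : 0 < n) (hm : 0 < m) : (SatVert.a : SatVert n m) ∉ satS n m := by
  rintro (⟨i, h⟩ | ⟨j, h⟩) <;> cases h

lemma lit_not_mem_satS (b : Bool) (i : Fin n) : (SatVert.lit b i : SatVert n m) ∉ satS n m := by
  rintro (⟨i', h⟩ | ⟨j', h⟩) <;> cases h

lemma adj_xhat {c : Fin m → Finset (Bool × Fin n)} {i : Fin n} {w : SatVert n m}
    (h : (satGraph c).Adj (.xhat i) w) : ∃ b, w = .lit b i := by
  rw [satGraph, SimpleGraph.fromRel_adj] at h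
  rcases h with ⟨hne, h | h⟩
  · cases w with
    | lit b i' =>
      have h' : i = i' := h
      exact ⟨b, by rw [h']⟩
    | xhat i' => exact False.elim h
    | clause j => exact False.elim h
    | a => exact False.elim h
  · cases w with
    | lit b i' => exact False.elim h
    | xhat i' => exact False.elim h
    | clause j => exact False.elim h
    | a => exact False.elim h

lemma adj_clause {c : Fin m → Finset (Bool × Fin n)} {j : Fin m} {w : SatVert n m}
    (h : (satGraph c).Adj (.clause j) w) :
    w = .a ∨ ∃ b i, w = .lit b i ∧ (b, i) ∈ c j := by
  rw [satGraph, SimpleGraph.fromRel_adj] at h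
  rcases h with ⟨hne, h | h⟩
  · cases w with
    | lit b i => exact False.elim h
    | xhat i => exact False.elim h
    | clause j' => exact False.elim h
    | a => exact False.elim h
  · cases w with
    | lit b i => exact Or.inr ⟨b, i, rfl, h⟩
    | xhat i => exact False.elim h
    | clause j' => exact False.elim h
    | a => exact Or.inl rfl

lemma forward_aux (c : Fin m → Finset (Bool × Fin n))
    (H K : (satGraph c).Subgraph)
    (hH : H.coe.IsTree) (hK : K.coe.IsTree)
    (hHS : satS n m ⊆ H.verts) (hKS : satS n m ⊆ K.verts)
    (hint : H.verts ∩ K.verts = satS n m)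
    (ha : SatVert.a ∉ H.verts)
    (hn : 0 < n) (hm : 0 < m) :
    ∃ t : Fin n → Bool, ∀ j, ∃ l ∈ c j, t l.2 = l.1 := by
  classical
  have hx0 : ∀ i : Fin n, (SatVert.xhat i : SatVert n m) ∈ satS n m := fun i => Or.inl ⟨i, rfl⟩
  have hc0 : ∀ j : Fin m, (SatVert.clause j : SatVert n m) ∈ satS n m := fun j => Or.inr ⟨j, rfl⟩
  have neigh : ∀ (L : (satGraph c).Subgraph), L.coe.IsTree → satS n m ⊆ L.verts →
      ∀ v, v ∈ L.verts → ∃ x, L.Adj v x := by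
    intro L hT hS v hv
    by_cases h : v = SatVert.xhat ⟨0, hn⟩
    · exact exists_subgraph_adj hT hv (hS (hc0 ⟨0, hm⟩))
        (by subst h; exact fun e => by cases e)
    · exact exists_subgraph_adj hT hv (hS (hx0 ⟨0, hn⟩)) h
  have litK : ∀ i : Fin n, ∃ b, (SatVert.lit b i : SatVert n m) ∈ K.verts := by
    intro i
    obtain ⟨x, hx⟩ := neigh K hK hKS _ (hKS (hx0 i))
    obtain ⟨b, rfl⟩ := adj_xhat (K.adj_sub hx)
    exact ⟨b, K.edge_vert hx.symm⟩
  have notboth : ∀ i : Fin n,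
      ¬ ((SatVert.lit true i : SatVert n m) ∈ H.verts ∧
         (SatVert.lit false i : SatVert n m) ∈ H.verts) := by
    rintro i ⟨h1, h2⟩
    obtain ⟨b, hb⟩ := litK i
    have hmem : (SatVert.lit b i : SatVert n m) ∈ satS n m := by
      rw [← hint]
      refine ⟨?_, hb⟩
      cases b
      · exact h2
      · exact h1
    exact lit_not_mem_satS b i hmem
  refine ⟨fun i => if (SatVert.lit true i : SatVert n m) ∈ H.verts then true else false, ?_⟩
  intro j
  obtain ⟨x, hx⟩ := neigh H hH hHS _ (hHS (hc0 j))
  rcases adj_clause (H.adj_sub hx) with rfl | ⟨b, i, rfl, hbi⟩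
  · exact absurd (H.edge_vert hx.symm) ha
  · refine ⟨(b, i), hbi, ?_⟩
    have hmem : (SatVert.lit b i : SatVert n m) ∈ H.verts := H.edge_vert hx.symm
    cases b with
    | true => simp [hmem]
    | false =>
      have hns : (SatVert.lit true i : SatVert n m) ∉ H.verts := fun h => notboth i ⟨h, hmem⟩
      simp [hns]

end SatLemmas

/-- `κ_{G_φ}(S) ≥ 2` iff the 3-CNF formula `φ` is satisfiable, i.e. there is a truth
assignment `t` under which every clause contains a true literal. -/
theorem sat_reduction_iff (n m : ℕ) (hn : 1 ≤ n) (hm : 1 ≤ m)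
    (c : Fin m → Finset (Bool × Fin n)) (hc : ∀ j, (c j).card = 3) :
    (∃ F : Fin 2 → (satGraph c).Subgraph, IsIDTrees (satGraph c) (satS n m) F) ↔
      (∃ t : Fin n → Bool, ∀ j, ∃ l ∈ c j, t l.2 = l.1) := by
  classical
  constructor
  · rintro ⟨F, htrees, hpair⟩
    by_cases ha : SatVert.a ∈ (F 0).verts
    · have ha1 : SatVert.a ∉ (F 1).verts := by
        intro h1
        have : (SatVert.a : SatVert n m) ∈ satS n m := by
          rw [← (hpair 0 1 (by decide)).1]; exact ⟨ha, h1⟩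
        exact a_not_mem_satS hn hm this
      exact forward_aux c (F 1) (F 0) (htrees 1).2 (htrees 0).2 (htrees 1).1 (htrees 0).1
        (hpair 1 0 (by decide)).1 ha1 hn hm
    · exact forward_aux c (F 0) (F 1) (htrees 0).2 (htrees 1).2 (htrees 0).1 (htrees 1).1
        (hpair 0 1 (by decide)).1 ha hn hm
  · rintro ⟨t, ht⟩
    choose σ hσ1 hσ2 using ht
    have hσ : ∀ j, ((t (σ j).2, (σ j).2) : Bool × Fin n) ∈ c j := by
      intro j
      rw [hσ2 j, Prod.mk.eta]
      exact hσ1 j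
    have hsub1 : satS n m ⊆ (tree1 hn c t σ hσ).verts := by
      rintro v (⟨i, rfl⟩ | ⟨j, rfl⟩) <;> trivial
    have hsub2 : satS n m ⊆ (tree2 c t).verts := by
      rintro v (⟨i, rfl⟩ | ⟨j, rfl⟩) <;> trivial
    have hverts : (tree1 hn c t σ hσ).verts ∩ (tree2 c t).verts = satS n m := by
      ext v
      cases v with
      | xhat i => exact iff_of_true ⟨trivial, trivial⟩ (Or.inl ⟨i, rfl⟩)
      | clause j => exact iff_of_true ⟨trivial, trivial⟩ (Or.inr ⟨j, rfl⟩)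
      | lit b i =>
        refine iff_of_false ?_ (lit_not_mem_satS b i)
        rintro ⟨h1, h2⟩
        have h1' : b = t i := h1
        have h2' : b = !t i := h2
        rw [h1'] at h2'
        simp at h2'
      | a =>
        refine iff_of_false ?_ (a_not_mem_satS hn hm)
        rintro ⟨h1, _⟩
        exact False.elim h1
    have hdisj : Disjoint (tree1 hn c t σ hσ).edgeSet (tree2 c t).edgeSet := by
      rw [Set.disjoint_left]
      intro e he1 he2
      induction e using Sym2.ind with
      | _ u v =>
        rw [Subgraph.mem_edgeSet] at he1 he2
        have hu2 : u ∈ t2V t := (tree2 c t).edge_vert he2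
        have hv2 : v ∈ t2V t := (tree2 c t).edge_vert he2.symm
        have hlit : ∃ i : Fin n, u = SatVert.lit (t i) i ∨ v = SatVert.lit (t i) i := by
          rcases he1 with (⟨i, rfl, rfl⟩ | ⟨i, hi, rfl, rfl⟩ | ⟨j, rfl, rfl⟩) |
            (⟨i, rfl, rfl⟩ | ⟨i, hi, rfl, rfl⟩ | ⟨j, rfl, rfl⟩)
          · exact ⟨i, Or.inr rfl⟩
          · exact ⟨i, Or.inr rfl⟩
          · exact ⟨(σ j).2, Or.inr rfl⟩
          · exact ⟨i, Or.inl rfl⟩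
          · exact ⟨i, Or.inl rfl⟩
          · exact ⟨(σ j).2, Or.inl rfl⟩
        obtain ⟨i, rfl | rfl⟩ := hlit
        · have : t i = !t i := hu2
          simp at this
        · have : t i = !t i := hv2
          simp at this
    refine ⟨![tree1 hn c t σ hσ, tree2 c t], ?_, ?_⟩
    · intro k
      fin_cases k
      · exact ⟨hsub1, tree1_isTree hn c t σ hσ⟩
      · exact ⟨hsub2, tree2_isTree c t⟩
    · intro k l hkl
      fin_cases k <;> fin_cases l
      · exact absurd rfl hkl
      · exact ⟨hverts, hdisj⟩
      · exact ⟨by rw [Set.inter_comm]; exact hverts, hdisj.symm⟩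
      · exact absurd rfl hkl
end

section
/- Let φ = c_1 ∧ … ∧ c_m be a 3-CNF formula over variables x_1, …, x_n (each clause c_j a set of three literals), with n ≥ 1 and m ≥ 1, and let G_φ and S be as follows: V(G_φ) = {x̂_i} ∪ {x_i} ∪ {x̄_i} (1 ≤ i ≤ n) ∪ {c_j : 1 ≤ j ≤ m} ∪ {a}; edges: x̂_i x_i, x̂_i x̄_i; x_i c_j when literal x_i ∈ c_j and x̄_i c_j when literal x̄_i ∈ c_j; x_1 and x̄_1 each adjacent to all x_i and x̄_i for 2 ≤ i ≤ n; and a adjacent to every x_i, every x̄_i and every c_j; S = {x̂_i : 1 ≤ i ≤ n} ∪ {c_j : 1 ≤ j ≤ m}. If there exists a truth assignment of x_1,…,x_n under which every clause of φ contains a true literal, then G_φ contains two internally disjoint trees connecting S. -/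
open SimpleGraph

lemma isTree_of_parent {V : Type*} {G : SimpleGraph V} (r : V) (p : V → V) (h : V → ℕ)
    (hadj : ∀ u v, G.Adj u v →
      (u ≠ r ∧ p u = v ∧ h v < h u) ∨ (v ≠ r ∧ p v = u ∧ h u < h v))
    (hpar : ∀ v, v ≠ r → G.Adj v (p v) ∧ h (p v) < h v) : G.IsTree := by
  have hreach : ∀ v, G.Reachable v r := by
    have key : ∀ k v, h v < k → G.Reachable v r := by
      intro k
      induction k with
      | zero => omega
      | succ k ih =>
        intro v hv
        by_cases hr : v = r
        · subst hr; exact Reachable.refl _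
        · obtain ⟨ha, hh⟩ := hpar v hr
          exact ha.reachable.trans (ih _ (by omega))
    exact fun v => key (h v + 1) v (by omega)
  constructor
  · have : Nonempty V := ⟨r⟩
    exact Connected.mk fun u v => (hreach u).trans (hreach v).symm
  · classical
    intro v0 cyc hcyc
    obtain ⟨u, humem, hmax⟩ := cyc.support.toFinset.exists_max_image h
      ⟨v0, by simp [Walk.start_mem_support]⟩
    rw [List.mem_toFinset] at humem
    set c' := cyc.rotate u humem with hc'
    have hcyc' : c'.IsCycle := hcyc.rotate humem
    have hmax' : ∀ w ∈ c'.support, h w ≤ h u := by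
      intro w hw
      rw [c'.support_eq_cons] at hw
      rcases List.mem_cons.mp hw with hw | hw
      · exact hw ▸ le_refl _
      · have := (Walk.support_rotate cyc u humem).perm.mem_iff.mp hw
        exact hmax w (List.mem_toFinset.mpr (List.mem_of_mem_tail this))
    have hnn : ¬ c'.Nil := hcyc'.not_nil
    obtain ⟨x, hux, q, hq⟩ := Walk.not_nil_iff.mp hnn
    have hnn2 : ¬ c'.reverse.Nil := by
      rw [Walk.not_nil_iff_lt_length, Walk.length_reverse]
      exact Walk.not_nil_iff_lt_length.mp hnn
    obtain ⟨y, huy, q', hq'⟩ := Walk.not_nil_iff.mp hnn2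
    have hx : x ∈ c'.support := by rw [hq]; simp [Walk.support_cons, Walk.start_mem_support]
    have hy : y ∈ c'.support := by
      have : y ∈ c'.reverse.support := by
        rw [hq']; simp [Walk.support_cons, Walk.start_mem_support]
      rwa [Walk.support_reverse, List.mem_reverse] at this
    have hpux : p u = x := by
      rcases hadj u x hux with ⟨_, h1, _⟩ | ⟨_, _, h2⟩
      · exact h1
      · exact absurd (hmax' x hx) (by omega)
    have hpuy : p u = y := by
      rcases hadj u y huy with ⟨_, h1, _⟩ | ⟨_, _, h2⟩
      · exact h1
      · exact absurd (hmax' y hy) (by omega)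
    have hxy : x = y := hpux ▸ hpuy
    subst hxy
    have hnodup : c'.edges.Nodup := hcyc'.isCircuit.isTrail.edges_nodup
    have he1 : c'.edges = s(u, x) :: q.edges := by rw [hq, Walk.edges_cons]
    have he2 : c'.edges.reverse = s(u, x) :: q'.edges := by
      rw [← Walk.edges_reverse, hq', Walk.edges_cons]
    have hlen : 3 ≤ c'.length := hcyc'.three_le_length
    have hq'ne : q'.edges.reverse ≠ [] := by
      have h1 : c'.reverse.length = q'.length + 1 := by rw [hq']; simp
      have h2 : c'.reverse.length = c'.length := Walk.length_reverse _
      have h3 : q'.edges.length = q'.length := Walk.length_edges _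
      intro hcon
      rw [List.reverse_eq_nil_iff, ← List.length_eq_zero_iff, h3] at hcon
      omega
    obtain ⟨z, l, hzl⟩ := List.exists_cons_of_ne_nil hq'ne
    have hE : q'.edges.reverse ++ [s(u, x)] = s(u, x) :: q.edges := by
      calc q'.edges.reverse ++ [s(u, x)] = (s(u, x) :: q'.edges).reverse := by simp
        _ = (c'.edges.reverse).reverse := by rw [he2]
        _ = c'.edges := by simp
        _ = s(u, x) :: q.edges := he1
    rw [hzl, List.cons_append] at hE
    obtain ⟨hz, hl⟩ := List.cons.injEq .. ▸ hE
    rw [he1] at hnodup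
    exact (List.nodup_cons.mp hnodup).1
      (hl ▸ List.mem_append_right l (List.mem_singleton_self _))

namespace SatTreeAux
open SatVert

variable {n m : ℕ} (c : Fin m → Finset (Bool × Fin n)) (t : Fin n → Bool)
  (f : Fin m → Bool × Fin n) (i0 : Fin n)

/-- one-directional edge relation of the first tree -/
def R1 : SatVert n m → SatVert n m → Prop := fun u v =>
  (∃ i, u = xhat i ∧ v = lit (t i) i)
  ∨ (∃ i, i ≠ i0 ∧ u = lit (t i0) i0 ∧ v = lit (t i) i)
  ∨ (∃ j, u = lit (f j).1 (f j).2 ∧ v = clause j)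

def V1 : Set (SatVert n m) :=
  {v | (∃ i, v = xhat i) ∨ (∃ i, v = lit (t i) i) ∨ (∃ j, v = clause j)}

/-- one-directional edge relation of the second tree -/
def R2 : SatVert n m → SatVert n m → Prop := fun u v =>
  (∃ i, u = xhat i ∧ v = lit (!t i) i)
  ∨ (∃ i, u = SatVert.a ∧ v = lit (!t i) i)
  ∨ (∃ j, u = SatVert.a ∧ v = clause j)

def V2 : Set (SatVert n m) :=
  {v | (∃ i, v = xhat i) ∨ (∃ i, v = lit (!t i) i) ∨ (∃ j, v = clause j) ∨ v = SatVert.a}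

lemma satGraph_adj {u v : SatVert n m} :
    (satGraph c).Adj u v ↔ u ≠ v ∧ (satRel c u v ∨ satRel c v u) :=
  SimpleGraph.fromRel_adj _ _ _

def sub1 (hi0 : i0.val = 0) (hf : ∀ j, f j ∈ c j) (hft : ∀ j, (f j).1 = t (f j).2) :
    (satGraph c).Subgraph where
  verts := V1 t
  Adj u v := R1 t f i0 u v ∨ R1 t f i0 v u
  adj_sub := by
    have key : ∀ u v : SatVert n m, R1 t f i0 u v → (satGraph c).Adj u v := by
      intro u v h
      rcases h with ⟨i, rfl, rfl⟩ | ⟨i, hi, rfl, rfl⟩ | ⟨j, rfl, rfl⟩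
      · rw [satGraph_adj]
        exact ⟨by simp, Or.inl rfl⟩
      · rw [satGraph_adj]
        refine ⟨by simp only [ne_eq, SatVert.lit.injEq, not_and]; exact fun _ h => hi h.symm, Or.inl ⟨hi0, ?_⟩⟩
        intro h0
        exact hi (Fin.ext (h0.trans hi0.symm))
      · rw [satGraph_adj]
        exact ⟨by simp, Or.inl (hf j)⟩
    rintro u v (h | h)
    · exact key u v h
    · exact (key v u h).symm
  edge_vert := by
    have key : ∀ u v : SatVert n m, R1 t f i0 u v → u ∈ V1 t ∧ v ∈ V1 t := by
      intro u v h
      rcases h with ⟨i, rfl, rfl⟩ | ⟨i, hi, rfl, rfl⟩ | ⟨j, rfl, rfl⟩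
      · exact ⟨Or.inl ⟨i, rfl⟩, Or.inr (Or.inl ⟨i, rfl⟩)⟩
      · exact ⟨Or.inr (Or.inl ⟨i0, rfl⟩), Or.inr (Or.inl ⟨i, rfl⟩)⟩
      · exact ⟨Or.inr (Or.inl ⟨(f j).2, by rw [hft j]⟩), Or.inr (Or.inr ⟨j, rfl⟩)⟩
    rintro u v (h | h)
    · exact (key u v h).1
    · exact (key v u h).2
  symm := ⟨fun u v h => h.symm⟩

def sub2 : (satGraph c).Subgraph where
  verts := V2 t
  Adj u v := R2 t u v ∨ R2 t v u
  adj_sub := by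
    have key : ∀ u v : SatVert n m, R2 t u v → (satGraph c).Adj u v := by
      intro u v h
      rcases h with ⟨i, rfl, rfl⟩ | ⟨i, rfl, rfl⟩ | ⟨j, rfl, rfl⟩
      · rw [satGraph_adj]; exact ⟨by simp, Or.inl rfl⟩
      · rw [satGraph_adj]; exact ⟨by simp, Or.inl trivial⟩
      · rw [satGraph_adj]; exact ⟨by simp, Or.inl trivial⟩
    rintro u v (h | h)
    · exact key u v h
    · exact (key v u h).symm
  edge_vert := by
    have key : ∀ u v : SatVert n m, R2 t u v → u ∈ V2 t ∧ v ∈ V2 t := by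
      intro u v h
      rcases h with ⟨i, rfl, rfl⟩ | ⟨i, rfl, rfl⟩ | ⟨j, rfl, rfl⟩
      · exact ⟨Or.inl ⟨i, rfl⟩, Or.inr (Or.inl ⟨i, rfl⟩)⟩
      · exact ⟨Or.inr (Or.inr (Or.inr rfl)), Or.inr (Or.inl ⟨i, rfl⟩)⟩
      · exact ⟨Or.inr (Or.inr (Or.inr rfl)), Or.inr (Or.inr (Or.inl ⟨j, rfl⟩))⟩
    rintro u v (h | h)
    · exact (key u v h).1
    · exact (key v u h).2
  symm := ⟨fun u v h => h.symm⟩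

/-- parent function for the first tree -/
def P1 : SatVert n m → SatVert n m
  | xhat i => lit (t i) i
  | lit _ _ => lit (t i0) i0
  | clause j => lit (t (f j).2) (f j).2
  | SatVert.a => SatVert.a

/-- height function for the first tree -/
def H1 : SatVert n m → ℕ
  | xhat _ => 2
  | lit _ i => if i = i0 then 0 else 1
  | clause _ => 2
  | SatVert.a => 0

lemma P1_mem {v : SatVert n m} (hv : v ∈ V1 t) : P1 t f i0 v ∈ V1 t := by
  rcases hv with ⟨i, rfl⟩ | ⟨i, rfl⟩ | ⟨j, rfl⟩
  · exact Or.inr (Or.inl ⟨i, rfl⟩)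
  · exact Or.inr (Or.inl ⟨i0, rfl⟩)
  · exact Or.inr (Or.inl ⟨(f j).2, rfl⟩)

lemma key1 (hft : ∀ j, (f j).1 = t (f j).2) (u v : SatVert n m) (h : R1 t f i0 u v) :
    (u ≠ lit (t i0) i0 ∧ P1 t f i0 u = v ∧ H1 i0 v < H1 i0 u) ∨
    (v ≠ lit (t i0) i0 ∧ P1 t f i0 v = u ∧ H1 i0 u < H1 i0 v) := by
  rcases h with ⟨i, rfl, rfl⟩ | ⟨i, hi, rfl, rfl⟩ | ⟨j, rfl, rfl⟩
  · left
    refine ⟨by simp, rfl, ?_⟩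
    simp only [H1]
    split <;> omega
  · right
    refine ⟨by simp only [ne_eq, SatVert.lit.injEq, not_and]; exact fun _ h => hi h, rfl, ?_⟩
    simp [H1, hi]
  · right
    refine ⟨by simp, ?_, ?_⟩
    · simp only [P1]
      rw [hft j]
    · simp only [H1]
      split <;> omega

lemma par1 (hft : ∀ j, (f j).1 = t (f j).2) (v : SatVert n m) (hv : v ∈ V1 t)
    (hne : v ≠ lit (t i0) i0) :
    (R1 t f i0 v (P1 t f i0 v) ∨ R1 t f i0 (P1 t f i0 v) v) ∧
      H1 i0 (P1 t f i0 v) < H1 i0 v := by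
  rcases hv with ⟨i, rfl⟩ | ⟨i, rfl⟩ | ⟨j, rfl⟩
  · refine ⟨Or.inl (Or.inl ⟨i, rfl, rfl⟩), ?_⟩
    simp only [P1, H1]; split <;> omega
  · have hi : i ≠ i0 := by
      rintro rfl
      exact hne rfl
    refine ⟨Or.inr (Or.inr (Or.inl ⟨i, hi, rfl, rfl⟩)), ?_⟩
    simp [P1, H1, hi]
  · refine ⟨Or.inr (Or.inr (Or.inr ⟨j, ?_, rfl⟩)), ?_⟩
    · simp only [P1]; rw [hft j]
    · simp only [P1, H1]; split <;> omega

/-- parent function for the second tree -/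
def P2 : SatVert n m → SatVert n m
  | xhat i => lit (!t i) i
  | lit _ _ => SatVert.a
  | clause _ => SatVert.a
  | SatVert.a => SatVert.a

/-- height function for the second tree -/
def H2 : SatVert n m → ℕ
  | xhat _ => 2
  | lit _ _ => 1
  | clause _ => 1
  | SatVert.a => 0

lemma P2_mem {v : SatVert n m} (hv : v ∈ V2 t) : P2 t v ∈ V2 t := by
  rcases hv with ⟨i, rfl⟩ | ⟨i, rfl⟩ | ⟨j, rfl⟩ | rfl
  · exact Or.inr (Or.inl ⟨i, rfl⟩)
  · exact Or.inr (Or.inr (Or.inr rfl))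
  · exact Or.inr (Or.inr (Or.inr rfl))
  · exact Or.inr (Or.inr (Or.inr rfl))

lemma key2 (u v : SatVert n m) (h : R2 t u v) :
    (u ≠ SatVert.a ∧ P2 t u = v ∧ H2 v < H2 u) ∨
    (v ≠ SatVert.a ∧ P2 t v = u ∧ H2 u < H2 v) := by
  rcases h with ⟨i, rfl, rfl⟩ | ⟨i, rfl, rfl⟩ | ⟨j, rfl, rfl⟩
  · exact Or.inl ⟨by simp, rfl, by simp [H2]⟩
  · exact Or.inr ⟨by simp, rfl, by simp [H2]⟩
  · exact Or.inr ⟨by simp, rfl, by simp [H2]⟩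

lemma par2 (v : SatVert n m) (hv : v ∈ V2 t) (hne : v ≠ SatVert.a) :
    (R2 t v (P2 t v) ∨ R2 t (P2 t v) v) ∧ H2 (P2 t v) < H2 v := by
  rcases hv with ⟨i, rfl⟩ | ⟨i, rfl⟩ | ⟨j, rfl⟩ | rfl
  · exact ⟨Or.inl (Or.inl ⟨i, rfl, rfl⟩), by simp [P2, H2]⟩
  · exact ⟨Or.inr (Or.inr (Or.inl ⟨i, rfl, rfl⟩)), by simp [P2, H2]⟩
  · exact ⟨Or.inr (Or.inr (Or.inr ⟨j, rfl, rfl⟩)), by simp [P2, H2]⟩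
  · exact absurd rfl hne

lemma not_R1_R2 (u v : SatVert n m) (h1 : R1 t f i0 u v) (h2 : R2 t u v) : False := by
  rcases h1 with ⟨i, rfl, hv⟩ | ⟨i, hi, rfl, hv⟩ | ⟨j, rfl, hv⟩ <;>
    rcases h2 with ⟨i', hu', hv'⟩ | ⟨i', hu', hv'⟩ | ⟨j', hu', hv'⟩ <;>
    simp_all [Bool.eq_not_self, Bool.not_eq_self] <;>
    (obtain ⟨h, rfl⟩ := hv; simp at h)
lemma not_R1_R2' (u v : SatVert n m) (h1 : R1 t f i0 u v) (h2 : R2 t v u) : False := by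
  rcases h1 with ⟨i, hu, rfl⟩ | ⟨i, hi, hu, rfl⟩ | ⟨j, hu, rfl⟩ <;>
    rcases h2 with ⟨i', hu', hv'⟩ | ⟨i', hu', hv'⟩ | ⟨j', hu', hv'⟩ <;>
    simp_all

end SatTreeAux

open SatTreeAux in
/-- If the 3-CNF formula `φ` is satisfiable, then `G_φ` contains two internally disjoint
trees connecting `S`. -/
theorem sat_trees_of_satisfiable (n m : ℕ) (hn : 1 ≤ n) (hm : 1 ≤ m)
    (c : Fin m → Finset (Bool × Fin n)) (hc : ∀ j, (c j).card = 3)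
    (t : Fin n → Bool) (ht : ∀ j, ∃ l ∈ c j, t l.2 = l.1) :
    ∃ F : Fin 2 → (satGraph c).Subgraph, IsIDTrees (satGraph c) (satS n m) F := by
  classical
  obtain ⟨i0, hi0⟩ : ∃ i0 : Fin n, i0.val = 0 := ⟨⟨0, hn⟩, rfl⟩
  choose f hf hft' using ht
  have hft : ∀ j, (f j).1 = t (f j).2 := fun j => (hft' j).symm
  refine ⟨![sub1 c t f i0 hi0 hf hft, sub2 c t], ?_, ?_⟩
  · intro k
    fin_cases k <;>
      simp only [Matrix.cons_val_zero, Matrix.cons_val_one, Matrix.head_cons]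
    · constructor
      · rintro v (⟨i, rfl⟩ | ⟨j, rfl⟩)
        · exact Or.inl ⟨i, rfl⟩
        · exact Or.inr (Or.inr ⟨j, rfl⟩)
      · apply isTree_of_parent (r := ⟨SatVert.lit (t i0) i0, Or.inr (Or.inl ⟨i0, rfl⟩)⟩)
          (p := fun v => ⟨P1 t f i0 v.1, P1_mem t f i0 v.2⟩)
          (h := fun v => H1 i0 v.1)
        · rintro ⟨u, hu⟩ ⟨v, hv⟩ h
          rw [Subgraph.coe_adj] at h
          rcases h with h | h
          · rcases key1 t f i0 hft u v h with ⟨h1, h2, h3⟩ | ⟨h1, h2, h3⟩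
            · exact Or.inl ⟨fun hh => h1 (congrArg Subtype.val hh), Subtype.ext h2, h3⟩
            · exact Or.inr ⟨fun hh => h1 (congrArg Subtype.val hh), Subtype.ext h2, h3⟩
          · rcases key1 t f i0 hft v u h with ⟨h1, h2, h3⟩ | ⟨h1, h2, h3⟩
            · exact Or.inr ⟨fun hh => h1 (congrArg Subtype.val hh), Subtype.ext h2, h3⟩
            · exact Or.inl ⟨fun hh => h1 (congrArg Subtype.val hh), Subtype.ext h2, h3⟩
        · rintro ⟨v, hv⟩ hne
          obtain ⟨hadj, hh⟩ := par1 t f i0 hft v hv (fun h => hne (Subtype.ext h))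
          exact ⟨hadj, hh⟩
    · constructor
      · rintro v (⟨i, rfl⟩ | ⟨j, rfl⟩)
        · exact Or.inl ⟨i, rfl⟩
        · exact Or.inr (Or.inr (Or.inl ⟨j, rfl⟩))
      · apply isTree_of_parent (r := ⟨SatVert.a, Or.inr (Or.inr (Or.inr rfl))⟩)
          (p := fun v => ⟨P2 t v.1, P2_mem t v.2⟩)
          (h := fun v => H2 v.1)
        · rintro ⟨u, hu⟩ ⟨v, hv⟩ h
          rw [Subgraph.coe_adj] at h
          rcases h with h | h
          · rcases key2 t u v h with ⟨h1, h2, h3⟩ | ⟨h1, h2, h3⟩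
            · exact Or.inl ⟨fun hh => h1 (congrArg Subtype.val hh), Subtype.ext h2, h3⟩
            · exact Or.inr ⟨fun hh => h1 (congrArg Subtype.val hh), Subtype.ext h2, h3⟩
          · rcases key2 t v u h with ⟨h1, h2, h3⟩ | ⟨h1, h2, h3⟩
            · exact Or.inr ⟨fun hh => h1 (congrArg Subtype.val hh), Subtype.ext h2, h3⟩
            · exact Or.inl ⟨fun hh => h1 (congrArg Subtype.val hh), Subtype.ext h2, h3⟩
        · rintro ⟨v, hv⟩ hne
          obtain ⟨hadj, hh⟩ := par2 t v hv (fun h => hne (Subtype.ext h))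
          exact ⟨hadj, hh⟩
  · have hvint : (sub1 c t f i0 hi0 hf hft).verts ∩ (sub2 c t).verts = satS n m := by
      ext v
      constructor
      · rintro ⟨hv1, hv2⟩
        rcases hv1 with ⟨i, rfl⟩ | ⟨i, rfl⟩ | ⟨j, rfl⟩
        · exact Or.inl ⟨i, rfl⟩
        · rcases hv2 with ⟨i', h⟩ | ⟨i', h⟩ | ⟨j', h⟩ | h
          · simp at h
          · simp only [SatVert.lit.injEq] at h
            obtain ⟨hb, rfl⟩ := h
            simp at hb
          · simp at h
          · simp at h
        · exact Or.inr ⟨j, rfl⟩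
      · rintro (⟨i, rfl⟩ | ⟨j, rfl⟩)
        · exact ⟨Or.inl ⟨i, rfl⟩, Or.inl ⟨i, rfl⟩⟩
        · exact ⟨Or.inr (Or.inr ⟨j, rfl⟩), Or.inr (Or.inr (Or.inl ⟨j, rfl⟩))⟩
    have hedis : Disjoint (sub1 c t f i0 hi0 hf hft).edgeSet (sub2 c t).edgeSet := by
      rw [Set.disjoint_left]
      rintro e he1 he2
      revert he1 he2
      induction e using Sym2.ind with
      | _ u v =>
        intro he1 he2
        rw [Subgraph.mem_edgeSet] at he1 he2
        rcases he1 with h1 | h1 <;> rcases he2 with h2 | h2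
        · exact not_R1_R2 t f i0 u v h1 h2
        · exact not_R1_R2' t f i0 u v h1 h2
        · exact not_R1_R2' t f i0 v u h1 h2
        · exact not_R1_R2 t f i0 v u h1 h2
    intro k l hkl
    fin_cases k <;> fin_cases l <;>
      simp only [Matrix.cons_val_zero, Matrix.cons_val_one, Matrix.head_cons] at hkl ⊢
    · exact absurd rfl hkl
    · exact ⟨hvint, hedis⟩
    · exact ⟨by rw [Set.inter_comm]; exact hvint, hedis.symm⟩
    · exact absurd rfl hkl
end
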